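/- arXiv:1603.00237 — 7 statements merged into one kernel-verified Lean document; each statement's English description precedes it below -/
import Mathlib

section
/- There exists a unique formal power series g(u) = 1 + \sum_{i\ge 1} g_i u^{-i} with complex coefficients satisfying the functional relation g(u+N) = g(u)(1 - u^{-2}), where the shift u \mapsto u+N is interpreted via re-expansion of the formal series in u^{-1}. -/
/- Formal power series in `u⁻¹` are modelled as `PowerSeries ℂ`, with `X = u⁻¹`.
The shift `f(u) ↦ f(u+a)` is defined by re-expansion:
`(u+a)^{-i} = ∑_{k≥0} (-a)^k C(i+k-1,k) u^{-i-k}`. -/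
noncomputable def shiftPS (a : ℂ) (f : PowerSeries ℂ) : PowerSeries ℂ :=
  PowerSeries.mk fun n =>
    ∑ i ∈ Finset.range (n + 1),
      (PowerSeries.coeff i f) * (-a) ^ (n - i) * ((n - 1).choose (n - i) : ℂ)

noncomputable def cSeq (N : ℂ) : ℕ → ℂ
  | 0 => 1
  | m+1 => (cSeq N m + ∑ i ∈ (Finset.range (m+1)).attach,
      cSeq N i.1 * (-N)^(m+2-i.1) * (((m+1).choose (m+2-i.1)) : ℂ)) / (N * (m+1))
  decreasing_by
  · exact Nat.lt_succ_self m
  · exact Finset.mem_range.mp i.2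

lemma cSeq_rec (N : ℂ) (hN : N ≠ 0) (m : ℕ) :
    N * (m+1) * cSeq N (m+1) =
      cSeq N m + ∑ i ∈ Finset.range (m+1),
        cSeq N i * (-N)^(m+2-i) * (((m+1).choose (m+2-i)) : ℂ) := by
  have h1 : (N * ((m : ℂ)+1)) ≠ 0 :=
    mul_ne_zero hN (by exact_mod_cast Nat.succ_ne_zero m)
  rw [cSeq, Finset.sum_attach (Finset.range (m+1))
    (fun i => cSeq N i * (-N)^(m+2-i) * (((m+1).choose (m+2-i)) : ℂ)),
    mul_comm, div_mul_cancel₀ _ h1]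

lemma satisfies_iff (N : ℂ) (g : PowerSeries ℂ) :
    shiftPS N g = g * (1 - PowerSeries.X ^ 2) ↔
      ∀ m : ℕ, N * (m+1) * PowerSeries.coeff (m+1) g =
        PowerSeries.coeff m g + ∑ i ∈ Finset.range (m+1),
          PowerSeries.coeff i g * (-N)^(m+2-i) * (((m+1).choose (m+2-i)) : ℂ) := by
  have hmul : ∀ n, PowerSeries.coeff n (g * (1 - PowerSeries.X ^ 2)) =
      PowerSeries.coeff n g - (if 2 ≤ n then PowerSeries.coeff (n-2) g else 0) := by
    intro n
    rw [mul_sub, mul_one, map_sub, PowerSeries.coeff_mul_X_pow']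
  have hstep : ∀ m : ℕ,
      (PowerSeries.coeff (m+2) (shiftPS N g)
        = PowerSeries.coeff (m+2) (g * (1 - PowerSeries.X ^ 2))) ↔
      N * (m+1) * PowerSeries.coeff (m+1) g =
        PowerSeries.coeff m g + ∑ i ∈ Finset.range (m+1),
          PowerSeries.coeff i g * (-N)^(m+2-i) * (((m+1).choose (m+2-i)) : ℂ) := by
    intro m
    rw [hmul, shiftPS, PowerSeries.coeff_mk]
    rw [show m+2+1 = (m+1)+1+1 from rfl, Finset.sum_range_succ, Finset.sum_range_succ]
    have e1 : m+2-(m+1) = 1 := by omega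
    have e2 : m+2-(m+2) = 0 := by omega
    have e3 : m+2-1 = m+1 := by omega
    rw [e1, e2, e3, Nat.choose_one_right, Nat.choose_zero_right]
    simp only [pow_one, pow_zero, Nat.cast_one, mul_one, Nat.cast_add, Nat.cast_one]
    rw [if_pos (by omega : 2 ≤ m+2), show m+2-2 = m from by omega]
    constructor
    · intro h; linear_combination -h
    · intro h; linear_combination -h
  constructor
  · intro h m
    rw [← hstep m, h]
  · intro h
    ext n
    match n with
    | 0 =>
      rw [hmul, shiftPS, PowerSeries.coeff_mk]
      simp
    | 1 =>
      rw [hmul, shiftPS, PowerSeries.coeff_mk]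
      simp [Finset.sum_range_succ]
    | (m+2) => exact (hstep m).mpr (h m)

/-- There exists a unique formal power series `g(u) = 1 + ∑_{i≥1} g_i u^{-i}`
satisfying `g(u+N) = g(u)(1 - u^{-2})`. -/
theorem exists_unique_g (N : ℕ) (hN : 0 < N) :
    ∃! g : PowerSeries ℂ,
      PowerSeries.constantCoeff g = 1 ∧
        shiftPS (N : ℂ) g = g * (1 - PowerSeries.X ^ 2) := by
  have hN0 : (N : ℂ) ≠ 0 := Nat.cast_ne_zero.mpr hN.ne'
  refine ⟨PowerSeries.mk (cSeq (N : ℂ)), ⟨?_, ?_⟩, ?_⟩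
  · rw [← PowerSeries.coeff_zero_eq_constantCoeff, PowerSeries.coeff_mk, cSeq]
  · rw [satisfies_iff]
    intro m
    simp only [PowerSeries.coeff_mk]
    exact cSeq_rec _ hN0 m
  · rintro g ⟨hg0, hgeq⟩
    rw [satisfies_iff] at hgeq
    have key : ∀ n, PowerSeries.coeff n g = cSeq (N : ℂ) n := by
      intro n
      induction n using Nat.strong_induction_on with
      | _ n ih =>
        match n with
        | 0 =>
          rw [PowerSeries.coeff_zero_eq_constantCoeff, hg0, cSeq]
        | (m+1) =>
          have h1 : (↑N * ((m : ℂ)+1)) ≠ 0 :=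
            mul_ne_zero hN0 (by exact_mod_cast Nat.succ_ne_zero m)
          have hg := hgeq m
          rw [ih m (by omega)] at hg
          rw [Finset.sum_congr rfl (fun i hi => by
            rw [ih i (Finset.mem_range.mp hi)])] at hg
          have := cSeq_rec (N : ℂ) hN0 m
          have : (↑N * ((m : ℂ)+1)) * PowerSeries.coeff (m+1) g
              = (↑N * ((m : ℂ)+1)) * cSeq (N : ℂ) (m+1) := by
            push_cast at hg this ⊢
            rw [hg, this]
          exact mul_left_cancel₀ h1 this
    ext n
    rw [key n, PowerSeries.coeff_mk]
end

section
/- If g(u) = 1 + \sum_{i\ge 1} g_i u^{-i} is the unique formal power series satisfying g(u+N) = g(u)(1-u^{-2}), then g(u) g(-u) (1 - u^{-2}) = 1, i.e. the unitarity property g(u)(1-u^{-1}) \cdot g(-u)(1+u^{-1}) = 1 holds. -/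
open PowerSeries Finset

noncomputable def Yser (a : ℂ) : PowerSeries ℂ :=
  PowerSeries.mk fun n => if n = 0 then 0 else (-a) ^ (n - 1)

lemma coeff_Yser (a : ℂ) (n : ℕ) :
    PowerSeries.coeff n (Yser a) = if n = 0 then 0 else (-a) ^ (n - 1) := by
  simp [Yser]

lemma coeff_Yser_pow (a : ℂ) (k n : ℕ) :
    PowerSeries.coeff n (Yser a ^ k) =
      if k ≤ n then (-a) ^ (n - k) * ((n - 1).choose (n - k) : ℂ) else 0 := by
  induction k generalizing n with
  | zero =>
    simp only [pow_zero, PowerSeries.coeff_one, Nat.zero_le, if_true]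
    rcases Nat.eq_zero_or_pos n with rfl | hn
    · simp
    · rw [if_neg hn.ne', Nat.choose_eq_zero_of_lt (by omega)]
      simp
  | succ k ih =>
    rw [pow_succ', PowerSeries.coeff_mul, Finset.Nat.sum_antidiagonal_eq_sum_range_succ_mk]
    dsimp only
    by_cases hn : k + 1 ≤ n
    · rw [if_pos hn]
      rcases Nat.eq_zero_or_pos k with rfl | hk
      · -- k = 0 : only p = n contributes
        rw [Finset.sum_eq_single n]
        · rw [coeff_Yser, if_neg (by omega), ih, Nat.sub_self, if_pos (Nat.zero_le _)]
          simp
        · intro p hp hpn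
          simp only [Finset.mem_range] at hp
          rcases Nat.eq_zero_or_pos p with rfl | hp1
          · rw [coeff_Yser]; simp
          · rw [ih, if_pos (Nat.zero_le _), Nat.sub_zero,
              Nat.choose_eq_zero_of_lt (by omega)]
            simp
        · intro h; exact absurd (Finset.self_mem_range_succ n) h
      · -- k ≥ 1
        have step : ∀ p ∈ Finset.range (n + 1),
            (PowerSeries.coeff p (Yser a)) * (PowerSeries.coeff (n - p) (Yser a ^ k)) =
            if p ∈ Finset.Icc 1 (n - k) then
              (-a) ^ (n - (k + 1)) * ((n - p - 1).choose (k - 1) : ℂ) else 0 := by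
          intro p hp
          simp only [Finset.mem_range] at hp
          rw [coeff_Yser, ih]
          rcases Nat.eq_zero_or_pos p with rfl | hp1
          · simp [Finset.mem_Icc]
          · rw [if_neg hp1.ne']
            by_cases hpk : k ≤ n - p
            · rw [if_pos hpk, if_pos (by simp only [Finset.mem_Icc]; omega)]
              have h1 : (n - p - 1).choose (n - p - k) = (n - p - 1).choose (k - 1) := by
                have := Nat.choose_symm (n := n - p - 1) (k := k - 1) (by omega)
                rwa [show n - p - 1 - (k - 1) = n - p - k by omega] at this
              rw [h1, ← mul_assoc, ← pow_add, show p - 1 + (n - p - k) = n - (k + 1) by omega]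
            · rw [if_neg hpk, if_neg (by simp only [Finset.mem_Icc]; omega), mul_zero]
        rw [Finset.sum_congr rfl step, Finset.sum_ite_mem,
          Finset.inter_eq_right.mpr (fun x hx => by
            simp only [Finset.mem_Icc] at hx
            simp only [Finset.mem_range]
            omega), ← Finset.mul_sum]
        have reindex : ∑ p ∈ Finset.Icc 1 (n - k), ((n - p - 1).choose (k - 1) : ℂ)
            = ∑ m ∈ Finset.Icc (k - 1) (n - 2), (m.choose (k - 1) : ℂ) := by
          apply Finset.sum_nbij' (i := fun p => n - p - 1) (j := fun m => n - m - 1)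
          · intro p hp; simp only [Finset.mem_Icc] at *; omega
          · intro m hm; simp only [Finset.mem_Icc] at *; omega
          · intro p hp; simp only [Finset.mem_Icc] at hp; omega
          · intro m hm; simp only [Finset.mem_Icc] at hm; omega
          · intro p hp; rfl
        rw [reindex, ← Nat.cast_sum, Nat.sum_Icc_choose,
          show n - 2 + 1 = n - 1 by omega, show k - 1 + 1 = k by omega,
          show n - (k + 1) = n - 1 - k by omega,
          ← Nat.choose_symm (show k ≤ n - 1 by omega)]
    · rw [if_neg hn]
      apply Finset.sum_eq_zero
      intro p hp
      simp only [Finset.mem_range] at hp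
      rcases Nat.eq_zero_or_pos p with rfl | hp1
      · rw [coeff_Yser]; simp
      · rw [ih, if_neg (show ¬ k ≤ n - p by omega), mul_zero]

/-- Substitution `f(X) ↦ f(Yser a)`, the shift `u ↦ u + a` on series in `X = u⁻¹`. -/
noncomputable def subFun (a : ℂ) (f : PowerSeries ℂ) : PowerSeries ℂ :=
  PowerSeries.mk fun n =>
    ∑ k ∈ Finset.range (n + 1),
      PowerSeries.coeff k f * PowerSeries.coeff n (Yser a ^ k)

lemma coeff_subFun (a : ℂ) (f : PowerSeries ℂ) (n : ℕ) :
    PowerSeries.coeff n (subFun a f) =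
      ∑ k ∈ Finset.range (n + 1),
        PowerSeries.coeff k f * PowerSeries.coeff n (Yser a ^ k) := by
  simp [subFun]

/-- triangular sum swap -/
lemma tri' (n : ℕ) (F : ℕ → ℕ → ℂ) (hF : ∀ i k, k < i → F i k = 0) :
    ∑ k ∈ Finset.range (n + 1), ∑ i ∈ Finset.range (k + 1), F i k
      = ∑ i ∈ Finset.range (n + 1), ∑ k ∈ Finset.range (n + 1), F i k := by
  rw [Finset.sum_comm]
  apply Finset.sum_congr rfl
  intro k hk
  simp only [Finset.mem_range] at hk
  apply Finset.sum_subset (Finset.range_subset_range.mpr (by omega))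
  intro i _ hi
  simp only [Finset.mem_range, not_lt] at hi
  exact hF i k (by omega)

lemma sum_shift_reindex (n i : ℕ) (H : ℕ → ℂ) (hH : ∀ j, n < i + j → H j = 0) (hi : i ≤ n) :
    ∑ k ∈ Finset.range (n + 1), (if i ≤ k then H (k - i) else 0)
      = ∑ j ∈ Finset.range (n + 1), H j := by
  have h1 : ∀ k ∈ Finset.range (n + 1), (if i ≤ k then H (k - i) else 0)
      = if k ∈ Finset.Ico i (n + 1) then H (k - i) else 0 := by
    intro k hk
    simp only [Finset.mem_range] at hk
    simp only [Finset.mem_Ico]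
    congr 1
    simp only [eq_iff_iff]
    omega
  rw [Finset.sum_congr rfl h1, Finset.sum_ite_mem,
    Finset.inter_eq_right.mpr (fun x hx => by
      simp only [Finset.mem_Ico] at hx
      simp only [Finset.mem_range]
      omega),
    Finset.sum_Ico_eq_sum_range]
  simp only [Nat.add_sub_cancel_left, show n + 1 - i = n + 1 - i from rfl]
  apply Finset.sum_subset (Finset.range_subset_range.mpr (by omega))
  intro j _ hj
  simp only [Finset.mem_range, not_lt] at hj
  exact hH j (by omega)

lemma subFun_one (a : ℂ) : subFun a 1 = 1 := by
  ext n
  rw [coeff_subFun, Finset.sum_eq_single 0]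
  · simp
  · intro k hk hk0
    rw [PowerSeries.coeff_one, if_neg hk0]
    simp
  · intro h; exact absurd (by simp : (0:ℕ) ∈ Finset.range (n+1)) h

lemma subFun_mul (a : ℂ) (f g : PowerSeries ℂ) :
    subFun a (f * g) = subFun a f * subFun a g := by
  ext n
  have L : PowerSeries.coeff n (subFun a (f * g))
      = ∑ i ∈ Finset.range (n + 1), ∑ k ∈ Finset.range (n + 1),
          (if i ≤ k then PowerSeries.coeff i f * PowerSeries.coeff (k - i) g *
            PowerSeries.coeff n (Yser a ^ k) else 0) := by
    rw [coeff_subFun]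
    have lhs1 : ∀ k ∈ Finset.range (n + 1),
        PowerSeries.coeff k (f * g) * PowerSeries.coeff n (Yser a ^ k)
          = ∑ i ∈ Finset.range (k + 1),
              (if i ≤ k then PowerSeries.coeff i f * PowerSeries.coeff (k - i) g *
                PowerSeries.coeff n (Yser a ^ k) else 0) := by
      intro k _
      rw [PowerSeries.coeff_mul, Finset.Nat.sum_antidiagonal_eq_sum_range_succ_mk,
        Finset.sum_mul]
      apply Finset.sum_congr rfl
      intro i hi
      simp only [Finset.mem_range] at hi
      rw [if_pos (by omega)]
    rw [Finset.sum_congr rfl lhs1,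
      tri' n (fun i k => if i ≤ k then PowerSeries.coeff i f * PowerSeries.coeff (k - i) g *
        PowerSeries.coeff n (Yser a ^ k) else 0)
        (fun i k h => if_neg (by omega))]
  have R : PowerSeries.coeff n (subFun a f * subFun a g)
      = ∑ i ∈ Finset.range (n + 1), ∑ j ∈ Finset.range (n + 1),
          PowerSeries.coeff i f * PowerSeries.coeff j g *
            PowerSeries.coeff n (Yser a ^ (i + j)) := by
    rw [PowerSeries.coeff_mul, Finset.Nat.sum_antidiagonal_eq_sum_range_succ_mk]
    dsimp only
    have rhs1 : ∀ p ∈ Finset.range (n + 1),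
        PowerSeries.coeff p (subFun a f) * PowerSeries.coeff (n - p) (subFun a g)
          = ∑ i ∈ Finset.range (n + 1), ∑ j ∈ Finset.range (n + 1),
              PowerSeries.coeff i f * PowerSeries.coeff p (Yser a ^ i) *
              (PowerSeries.coeff j g * PowerSeries.coeff (n - p) (Yser a ^ j)) := by
      intro p hp
      simp only [Finset.mem_range] at hp
      rw [coeff_subFun, coeff_subFun]
      rw [Finset.sum_subset (Finset.range_subset_range.mpr (show p + 1 ≤ n + 1 by omega))
          (fun k _ hk => by
            simp only [Finset.mem_range, not_lt] at hk
            rw [coeff_Yser_pow, if_neg (by omega), mul_zero]),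
        Finset.sum_subset (Finset.range_subset_range.mpr (show n - p + 1 ≤ n + 1 by omega))
          (fun k _ hk => by
            simp only [Finset.mem_range, not_lt] at hk
            rw [coeff_Yser_pow, if_neg (by omega), mul_zero]),
        Finset.sum_mul_sum]
    calc ∑ p ∈ Finset.range (n + 1),
          PowerSeries.coeff p (subFun a f) * PowerSeries.coeff (n - p) (subFun a g)
        = ∑ p ∈ Finset.range (n + 1), ∑ i ∈ Finset.range (n + 1), ∑ j ∈ Finset.range (n + 1),
            PowerSeries.coeff i f * PowerSeries.coeff p (Yser a ^ i) *
            (PowerSeries.coeff j g * PowerSeries.coeff (n - p) (Yser a ^ j)) :=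
          Finset.sum_congr rfl rhs1
      _ = ∑ i ∈ Finset.range (n + 1), ∑ p ∈ Finset.range (n + 1), ∑ j ∈ Finset.range (n + 1),
            PowerSeries.coeff i f * PowerSeries.coeff p (Yser a ^ i) *
            (PowerSeries.coeff j g * PowerSeries.coeff (n - p) (Yser a ^ j)) :=
          Finset.sum_comm
      _ = ∑ i ∈ Finset.range (n + 1), ∑ j ∈ Finset.range (n + 1), ∑ p ∈ Finset.range (n + 1),
            PowerSeries.coeff i f * PowerSeries.coeff p (Yser a ^ i) *
            (PowerSeries.coeff j g * PowerSeries.coeff (n - p) (Yser a ^ j)) :=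
          Finset.sum_congr rfl (fun i _ => Finset.sum_comm)
      _ = ∑ i ∈ Finset.range (n + 1), ∑ j ∈ Finset.range (n + 1),
            PowerSeries.coeff i f * PowerSeries.coeff j g *
              PowerSeries.coeff n (Yser a ^ (i + j)) := by
          apply Finset.sum_congr rfl
          intro i _
          apply Finset.sum_congr rfl
          intro j _
          rw [pow_add, PowerSeries.coeff_mul, Finset.Nat.sum_antidiagonal_eq_sum_range_succ_mk,
            Finset.mul_sum]
          apply Finset.sum_congr rfl
          intro p _
          ring
  rw [L, R]
  apply Finset.sum_congr rfl
  intro i hi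
  simp only [Finset.mem_range] at hi
  rw [← sum_shift_reindex n i
      (fun j => PowerSeries.coeff i f * PowerSeries.coeff j g *
        PowerSeries.coeff n (Yser a ^ (i + j)))
      (fun j hj => by rw [coeff_Yser_pow, if_neg (by omega), mul_zero]) (by omega)]
  apply Finset.sum_congr rfl
  intro k _
  by_cases h : i ≤ k
  · rw [if_pos h, if_pos h, show i + (k - i) = k by omega]
  · rw [if_neg h, if_neg h]

lemma subFun_pow (a : ℂ) (f : PowerSeries ℂ) (m : ℕ) :
    subFun a (f ^ m) = (subFun a f) ^ m := by
  induction m with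
  | zero => simpa using subFun_one a
  | succ m ih => rw [pow_succ, pow_succ, subFun_mul, ih]

lemma subFun_Yser_neg (a : ℂ) : subFun a (Yser (-a)) = PowerSeries.X := by
  ext n
  rw [coeff_subFun, PowerSeries.coeff_X]
  rcases Nat.eq_zero_or_pos n with rfl | hn
  · rw [Finset.sum_range_one, coeff_Yser]
    simp
  · rw [Finset.sum_range_succ', coeff_Yser, if_pos rfl, zero_mul, add_zero]
    have h1 : ∀ k ∈ Finset.range n,
        PowerSeries.coeff (k + 1) (Yser (-a)) * PowerSeries.coeff n (Yser a ^ (k + 1))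
          = a ^ (n - 1) * (-1 : ℂ) ^ (n - 1) * ((-1 : ℂ) ^ k * ((n - 1).choose k : ℂ)) := by
      intro k hk
      simp only [Finset.mem_range] at hk
      rw [coeff_Yser, if_neg (Nat.succ_ne_zero k), coeff_Yser_pow, if_pos (by omega)]
      have hc : (n - 1).choose (n - (k + 1)) = (n - 1).choose k := by
        have := Nat.choose_symm (n := n - 1) (k := k) (by omega)
        rwa [show n - 1 - k = n - (k + 1) by omega] at this
      have hsign : ((-1 : ℂ)) ^ (n - (k + 1)) = (-1 : ℂ) ^ (n - 1) * (-1 : ℂ) ^ k := by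
        have h2 : ((-1 : ℂ)) ^ (n - (k + 1)) * ((-1 : ℂ) ^ k * (-1 : ℂ) ^ k) =
            (-1 : ℂ) ^ (n - 1) * (-1 : ℂ) ^ k := by
          rw [← pow_add, ← pow_add, show n - (k + 1) + (k + k) = n - 1 + k by omega, pow_add]
        rwa [← pow_add, ← two_mul, pow_mul, neg_one_sq, one_pow, mul_one] at h2
      have e1 : (-a : ℂ) ^ (n - (k + 1)) =
          (-1 : ℂ) ^ (n - 1) * (-1 : ℂ) ^ k * a ^ (n - (k + 1)) := by
        rw [neg_pow, hsign]
      rw [hc, e1, neg_neg, show (k + 1 - 1) = k from rfl]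
      have hpow : (a : ℂ) ^ k * a ^ (n - (k + 1)) = a ^ (n - 1) := by
        rw [← pow_add, show k + (n - (k + 1)) = n - 1 by omega]
      calc a ^ k * ((-1 : ℂ) ^ (n - 1) * (-1 : ℂ) ^ k * a ^ (n - (k + 1)) *
              ((n - 1).choose k : ℂ))
          = (a ^ k * a ^ (n - (k + 1))) *
              ((-1 : ℂ) ^ (n - 1) * ((-1 : ℂ) ^ k * ((n - 1).choose k : ℂ))) := by ring
        _ = a ^ (n - 1) * (-1 : ℂ) ^ (n - 1) * ((-1 : ℂ) ^ k * ((n - 1).choose k : ℂ)) := by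
            rw [hpow]; ring
    rw [Finset.sum_congr rfl h1, ← Finset.mul_sum]
    have halt : (∑ k ∈ Finset.range n, ((-1 : ℂ) ^ k * ((n - 1).choose k : ℂ)))
        = if n - 1 = 0 then 1 else 0 := by
      have h0 := Int.alternating_sum_range_choose (n := n - 1)
      have h3 := congrArg (fun z : ℤ => (z : ℂ)) h0
      push_cast at h3
      rwa [show n - 1 + 1 = n by omega] at h3
    rw [halt]
    rcases eq_or_ne n 1 with rfl | hn1
    · norm_num
    · rw [if_neg (by omega), if_neg hn1, mul_zero]

lemma subFun_leftInv (a : ℂ) (f : PowerSeries ℂ) :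
    subFun a (subFun (-a) f) = f := by
  ext n
  rw [coeff_subFun]
  have h1 : ∀ k ∈ Finset.range (n + 1),
      PowerSeries.coeff k (subFun (-a) f) * PowerSeries.coeff n (Yser a ^ k)
        = ∑ m ∈ Finset.range (k + 1),
            PowerSeries.coeff m f * PowerSeries.coeff k (Yser (-a) ^ m) *
              PowerSeries.coeff n (Yser a ^ k) := by
    intro k _
    rw [coeff_subFun, Finset.sum_mul]
  rw [Finset.sum_congr rfl h1,
    tri' n (fun m k => PowerSeries.coeff m f * PowerSeries.coeff k (Yser (-a) ^ m) *
        PowerSeries.coeff n (Yser a ^ k))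
      (fun m k h => by rw [coeff_Yser_pow, if_neg (by omega), mul_zero, zero_mul])]
  have h2 : ∀ m ∈ Finset.range (n + 1),
      (∑ k ∈ Finset.range (n + 1),
        PowerSeries.coeff m f * PowerSeries.coeff k (Yser (-a) ^ m) *
          PowerSeries.coeff n (Yser a ^ k))
      = PowerSeries.coeff m f * PowerSeries.coeff n (PowerSeries.X ^ m : PowerSeries ℂ) := by
    intro m _
    have : (∑ k ∈ Finset.range (n + 1),
        PowerSeries.coeff m f * PowerSeries.coeff k (Yser (-a) ^ m) *
          PowerSeries.coeff n (Yser a ^ k))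
        = PowerSeries.coeff m f * PowerSeries.coeff n (subFun a (Yser (-a) ^ m)) := by
      rw [coeff_subFun, Finset.mul_sum]
      apply Finset.sum_congr rfl
      intro k _
      ring
    rw [this, subFun_pow, subFun_Yser_neg]
  rw [Finset.sum_congr rfl h2, Finset.sum_eq_single n]
  · rw [PowerSeries.coeff_X_pow, if_pos rfl, mul_one]
  · intro m _ hm
    rw [PowerSeries.coeff_X_pow, if_neg (fun h => hm h.symm), mul_zero]
  · intro h; exact absurd (Finset.self_mem_range_succ n) h

lemma shiftPS_eq (a : ℂ) (f : PowerSeries ℂ) : shiftPS a f = subFun a f := by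
  ext n
  rw [coeff_subFun]
  simp only [shiftPS, PowerSeries.coeff_mk]
  apply Finset.sum_congr rfl
  intro i hi
  simp only [Finset.mem_range] at hi
  rw [coeff_Yser_pow, if_pos (by omega), mul_assoc]

lemma rescale_shiftPS (a : ℂ) (f : PowerSeries ℂ) :
    PowerSeries.rescale (-1 : ℂ) (shiftPS a f)
      = shiftPS (-a) (PowerSeries.rescale (-1 : ℂ) f) := by
  ext n
  rw [PowerSeries.coeff_rescale]
  simp only [shiftPS, PowerSeries.coeff_mk, PowerSeries.coeff_rescale, neg_neg]
  rw [Finset.mul_sum]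
  apply Finset.sum_congr rfl
  intro i hi
  simp only [Finset.mem_range] at hi
  have hsign : (-1 : ℂ) ^ n * (-a) ^ (n - i) = (-1 : ℂ) ^ i * a ^ (n - i) := by
    rw [neg_pow a, ← mul_assoc, ← pow_add,
      show n + (n - i) = 2 * (n - i) + i by omega, pow_add, pow_mul, neg_one_sq, one_pow,
      one_mul]
  calc (-1 : ℂ) ^ n * (PowerSeries.coeff i f * (-a) ^ (n - i) * ((n - 1).choose (n - i) : ℂ))
      = ((-1 : ℂ) ^ n * (-a) ^ (n - i)) * PowerSeries.coeff i f *
          ((n - 1).choose (n - i) : ℂ) := by ring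
    _ = ((-1 : ℂ) ^ i * a ^ (n - i)) * PowerSeries.coeff i f *
          ((n - 1).choose (n - i) : ℂ) := by rw [hsign]
    _ = (-1 : ℂ) ^ i * PowerSeries.coeff i f * a ^ (n - i) *
          ((n - 1).choose (n - i) : ℂ) := by ring

lemma const_of_shift_inv (N : ℕ) (hN : 0 < N) (F : PowerSeries ℂ)
    (hF : shiftPS (N : ℂ) F = F) :
    ∀ m, 1 ≤ m → PowerSeries.coeff m F = 0 := by
  intro m
  induction m using Nat.strong_induction_on with
  | _ m ih =>
    intro hm
    have h := congrArg (PowerSeries.coeff (m + 1)) hF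
    simp only [shiftPS, PowerSeries.coeff_mk] at h
    rw [Finset.sum_range_succ, Finset.sum_range_succ] at h
    have hz : (∑ i ∈ Finset.range m,
        PowerSeries.coeff i F * (-(N : ℂ)) ^ (m + 1 - i) * ((m + 1 - 1).choose (m + 1 - i) : ℂ)) = 0 := by
      apply Finset.sum_eq_zero
      intro i hi
      simp only [Finset.mem_range] at hi
      rcases Nat.eq_zero_or_pos i with rfl | hi1
      · rw [show m + 1 - 1 = m from rfl, Nat.sub_zero, Nat.choose_eq_zero_of_lt (by omega)]
        simp
      · rw [ih i hi hi1, zero_mul, zero_mul]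
    rw [hz, zero_add] at h
    simp only [Nat.add_sub_cancel, Nat.sub_self, show m + 1 - 1 = m from rfl,
      Nat.choose_zero_right, pow_zero, mul_one, Nat.cast_one,
      show m + 1 - m = 1 by omega, pow_one, Nat.choose_one_right] at h
    -- h : F_m * (-N) * m + F_{m+1} = F_{m+1}
    have h2 : PowerSeries.coeff m F * (-(N : ℂ)) * (m : ℂ) = 0 := by
      linear_combination h
    have hNm : (-(N : ℂ)) * (m : ℂ) ≠ 0 := by
      apply mul_ne_zero
      · simp only [ne_eq, neg_eq_zero, Nat.cast_eq_zero]; omega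
      · simp only [ne_eq, Nat.cast_eq_zero]; omega
    rw [mul_assoc] at h2
    rcases mul_eq_zero.mp h2 with h3 | h3
    · exact h3
    · exact absurd h3 hNm

/-- Unitarity: if `g(u) = 1 + ⋯` satisfies `g(u+N) = g(u)(1-u^{-2})`, then
`g(u) g(-u) (1-u^{-2}) = 1`, where `g(-u)` is obtained by `u ↦ -u`,
i.e. by rescaling `X = u⁻¹` by `-1`. -/
theorem unitarity_g (N : ℕ) (hN : 0 < N) (g : PowerSeries ℂ)
    (hg0 : PowerSeries.constantCoeff g = 1)
    (hg : shiftPS (N : ℂ) g = g * (1 - PowerSeries.X ^ 2)) :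
    g * (PowerSeries.rescale (-1 : ℂ) g) * (1 - PowerSeries.X ^ 2) = 1 := by
  set G := PowerSeries.rescale (-1 : ℂ) g with hG
  have hres2 : PowerSeries.rescale (-1 : ℂ) (1 - PowerSeries.X ^ 2 : PowerSeries ℂ)
      = 1 - PowerSeries.X ^ 2 := by
    rw [map_sub, map_one, map_pow, PowerSeries.rescale_neg_one_X, neg_sq]
  have h1 : shiftPS (-(N : ℂ)) G = G * (1 - PowerSeries.X ^ 2) := by
    have := congrArg (PowerSeries.rescale (-1 : ℂ)) hg
    rw [rescale_shiftPS, map_mul, hres2] at this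
    exact this
  have h2 : shiftPS (N : ℂ) (G * (1 - PowerSeries.X ^ 2)) = G := by
    rw [← h1, shiftPS_eq, shiftPS_eq, subFun_leftInv]
  set F := g * G * (1 - PowerSeries.X ^ 2) with hF
  have hFinv : shiftPS (N : ℂ) F = F := by
    have : F = g * (G * (1 - PowerSeries.X ^ 2)) := by ring
    rw [this, shiftPS_eq, subFun_mul, ← shiftPS_eq, ← shiftPS_eq, hg, h2]
    ring
  have hF0 : PowerSeries.constantCoeff F = 1 := by
    have hG0 : PowerSeries.constantCoeff G = 1 := by
      rw [hG, ← PowerSeries.coeff_zero_eq_constantCoeff_apply, PowerSeries.coeff_rescale,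
        pow_zero, one_mul, PowerSeries.coeff_zero_eq_constantCoeff_apply, hg0]
    rw [hF]
    simp only [map_mul, map_sub, map_one, map_pow, PowerSeries.constantCoeff_X, hg0, hG0]
    norm_num
  have hcoeffs := const_of_shift_inv N hN F hFinv
  have : F = 1 := by
    ext n
    rcases Nat.eq_zero_or_pos n with rfl | hn
    · rw [PowerSeries.coeff_zero_eq_constantCoeff, hF0]
      simp
    · rw [hcoeffs n hn, PowerSeries.coeff_one, if_neg (by omega)]
  exact this
end

section
/- The unique formal power series g(u) = 1 + \sum_{i\ge 1} g_i u^{-i} satisfying g(u+N) = g(u)(1-u^{-2}) also satisfies the product formula g(u) g(u+1) \cdots g(u+N-1) = (1 - u^{-1})^{-1}. -/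
open PowerSeries Finset

noncomputable def SS (a : ℂ) : PowerSeries ℂ :=
  PowerSeries.mk fun n => if n = 0 then 0 else (-a) ^ (n - 1)

lemma coeff_SS (a : ℂ) (n : ℕ) :
    PowerSeries.coeff n (SS a) = if n = 0 then 0 else (-a) ^ (n - 1) :=
  PowerSeries.coeff_mk _ _

lemma choose_sum_Icc (i n : ℕ) (h : i + 1 ≤ n) :
    ∑ p ∈ Icc i (n-1), ((p-1).choose (p-i)) = (n-1).choose (n-i-1) := by
  rcases Nat.eq_zero_or_pos i with hi | hi
  · subst hi
    have h1 : ∀ p ∈ Icc 0 (n-1), (p-1).choose (p-0) = if p = 0 then 1 else 0 := by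
      intro p _
      rcases p with _ | q
      · simp
      · simp [Nat.choose_eq_zero_of_lt (Nat.lt_succ_of_le (Nat.sub_le q 0))]
    rw [Finset.sum_congr rfl h1, Finset.sum_ite_eq' _ 0]
    have : n - 0 - 1 = n - 1 := by omega
    rw [this]
    simp [Nat.choose_self]
  · -- reindex p = r + 1
    have hIcc : Icc i (n-1) = (Icc (i-1) (n-2)).map (addRightEmbedding 1) := by
      rw [map_add_right_Icc]
      congr 1 <;> omega
    rw [hIcc, Finset.sum_map]
    have h2 : ∀ r ∈ Icc (i-1) (n-2),
        ((addRightEmbedding 1 r - 1).choose (addRightEmbedding 1 r - i)) = r.choose (i-1) := by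
      intro r hr
      simp only [Finset.mem_Icc] at hr
      simp only [addRightEmbedding_apply]
      have e1 : r + 1 - 1 = r := by omega
      have e2 : r + 1 - i = r - (i-1) := by omega
      rw [e1, e2, Nat.choose_symm (by omega)]
    rw [Finset.sum_congr rfl h2, Nat.sum_Icc_choose]
    have e3 : n - 2 + 1 = n - 1 := by omega
    have e4 : i - 1 + 1 = i := by omega
    rw [e3, e4, ← Nat.choose_symm (show i ≤ n - 1 by omega)]
    congr 1
    omega

lemma coeff_SS_pow (a : ℂ) (i n : ℕ) :
    PowerSeries.coeff n ((SS a) ^ i)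
      = if i ≤ n then (-a) ^ (n - i) * ((n-1).choose (n-i) : ℂ) else 0 := by
  induction i generalizing n with
  | zero =>
    rcases n with _ | m
    · simp
    · simp [PowerSeries.coeff_one, Nat.choose_eq_zero_of_lt (Nat.lt_succ_of_le (Nat.sub_le m 0))]
  | succ i ih =>
    rw [pow_succ, PowerSeries.coeff_mul, Finset.Nat.sum_antidiagonal_eq_sum_range_succ_mk]
    by_cases hn : i + 1 ≤ n
    · rw [if_pos hn]
      have hsub : Icc i (n-1) ⊆ range (n+1) := by
        intro p hp; simp only [Finset.mem_Icc] at hp; simp only [Finset.mem_range]; omega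
      rw [← Finset.sum_subset hsub ?vanish]
      · have hterm : ∀ p ∈ Icc i (n-1),
            PowerSeries.coeff p (SS a ^ i) * PowerSeries.coeff (n - p) (SS a)
              = (-a)^(n-(i+1)) * (((p-1).choose (p-i) : ℕ) : ℂ) := by
          intro p hp
          simp only [Finset.mem_Icc] at hp
          rw [ih, if_pos hp.1, coeff_SS, if_neg (by omega)]
          have : (-a)^(p-i) * (((p-1).choose (p-i):ℕ):ℂ) * (-a)^(n-p-1)
              = (-a)^((p-i)+(n-p-1)) * ((p-1).choose (p-i) : ℂ) := by ring
          rw [this]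
          congr 2
          omega
        rw [Finset.sum_congr rfl hterm, ← Finset.mul_sum, ← Nat.cast_sum,
          choose_sum_Icc i n hn]
        congr 2
      · intro p hp hnp
        simp only [Finset.mem_range] at hp
        simp only [Finset.mem_Icc, not_and_or, not_le] at hnp
        rcases hnp with h1 | h2
        · rw [ih, if_neg (by omega), zero_mul]
        · have : p = n := by omega
          subst this
          rw [coeff_SS]
          simp
    · rw [if_neg hn]
      apply Finset.sum_eq_zero
      intro p hp
      simp only [Finset.mem_range] at hp
      by_cases hip : i ≤ p
      · have : p = n := by omega
        subst this
        rw [coeff_SS]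
        simp
      · rw [ih, if_neg hip, zero_mul]

lemma coeff_shift (a : ℂ) (f : PowerSeries ℂ) (n : ℕ) :
    PowerSeries.coeff n (shiftPS a f)
      = ∑ i ∈ range (n+1), PowerSeries.coeff i f * PowerSeries.coeff n ((SS a)^i) := by
  rw [shiftPS, PowerSeries.coeff_mk]
  apply Finset.sum_congr rfl
  intro i hi
  simp only [Finset.mem_range] at hi
  rw [coeff_SS_pow, if_pos (by omega)]
  ring

lemma coeff_shift' (a : ℂ) (f : PowerSeries ℂ) {n m : ℕ} (h : n ≤ m) :
    PowerSeries.coeff n (shiftPS a f)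
      = ∑ i ∈ range (m+1), PowerSeries.coeff i f * PowerSeries.coeff n ((SS a)^i) := by
  rw [coeff_shift]
  apply Finset.sum_subset
  · intro x hx; simp only [Finset.mem_range] at *; omega
  · intro x hx hnx
    simp only [Finset.mem_range] at hx hnx
    rw [coeff_SS_pow, if_neg (by omega), mul_zero]

lemma shift_add (a : ℂ) (f g : PowerSeries ℂ) :
    shiftPS a (f + g) = shiftPS a f + shiftPS a g := by
  ext n
  simp only [map_add, coeff_shift, ← Finset.sum_add_distrib]
  exact Finset.sum_congr rfl fun i _ => by rw [add_mul]

lemma shift_zero (a : ℂ) : shiftPS a 0 = 0 := by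
  ext n; simp [coeff_shift]

lemma shift_one (a : ℂ) : shiftPS a 1 = 1 := by
  ext n
  rw [coeff_shift]
  rcases n with _ | m
  · simp
  · rw [Finset.sum_eq_zero, PowerSeries.coeff_one, if_neg (by omega)]
    intro i hi
    rcases Nat.eq_zero_or_pos i with h | h
    · subst h
      rw [coeff_SS_pow, if_pos (by omega)]
      simp [Nat.choose_eq_zero_of_lt (Nat.lt_succ_of_le (Nat.sub_le m 0))]
    · rw [PowerSeries.coeff_one, if_neg (by omega), zero_mul]

lemma shift_C_mul (a r : ℂ) (f : PowerSeries ℂ) :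
    shiftPS a (PowerSeries.C r * f) = PowerSeries.C r * shiftPS a f := by
  ext n
  simp only [coeff_shift, PowerSeries.coeff_C_mul, Finset.mul_sum]
  exact Finset.sum_congr rfl fun i _ => by ring

lemma shift_X (a : ℂ) : shiftPS a PowerSeries.X = SS a := by
  ext n
  rw [coeff_shift, coeff_SS]
  rcases n with _ | m
  · simp
  · rw [Finset.sum_eq_single 1]
    · rw [PowerSeries.coeff_X, if_pos rfl, coeff_SS_pow, if_pos (by omega), one_mul]
      simp
    · intro i hi hne
      rw [PowerSeries.coeff_X, if_neg hne, zero_mul]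
    · intro h
      simp only [Finset.mem_range] at h
      omega

-- reshape lemma
lemma reshape (n : ℕ) (F : ℕ × ℕ → ℂ) (hF : ∀ p : ℕ × ℕ, n < p.1 + p.2 → F p = 0) :
    ∑ k ∈ range (n+1), ∑ p ∈ Finset.HasAntidiagonal.antidiagonal k, F p
      = ∑ i ∈ range (n+1), ∑ j ∈ range (n+1), F (i, j) := by
  have hdisj : (↑(range (n+1)) : Set ℕ).PairwiseDisjoint
      (fun k => (Finset.HasAntidiagonal.antidiagonal k : Finset (ℕ × ℕ))) := by
    intro x _ y _ hxy
    simp only [Function.onFun, Finset.disjoint_left]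
    intro p hp hq
    simp only [Finset.HasAntidiagonal.mem_antidiagonal] at hp hq
    exact hxy (hp ▸ hq ▸ rfl)
  rw [← Finset.sum_biUnion hdisj, ← Finset.sum_product']
  apply Finset.sum_subset
  · intro p hp
    simp only [Finset.mem_biUnion, Finset.mem_range, Finset.HasAntidiagonal.mem_antidiagonal,
      Finset.mem_product] at hp ⊢
    obtain ⟨k, hk, hpk⟩ := hp
    omega
  · intro p hp hnp
    simp only [Finset.mem_biUnion, Finset.mem_range, Finset.HasAntidiagonal.mem_antidiagonal,
      Finset.mem_product] at hp hnp
    apply hF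
    by_contra hcon
    push_neg at hcon
    exact hnp ⟨p.1 + p.2, by omega, rfl⟩

lemma shift_mul (a : ℂ) (f g : PowerSeries ℂ) :
    shiftPS a (f * g) = shiftPS a f * shiftPS a g := by
  ext n
  rw [coeff_shift, PowerSeries.coeff_mul]
  have lhs_eq : ∀ k ∈ range (n+1),
      PowerSeries.coeff k (f*g) * PowerSeries.coeff n ((SS a)^k)
        = ∑ p ∈ Finset.HasAntidiagonal.antidiagonal k,
            PowerSeries.coeff p.1 f * PowerSeries.coeff p.2 g
              * PowerSeries.coeff n ((SS a)^(p.1+p.2)) := by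
    intro k _
    rw [PowerSeries.coeff_mul, Finset.sum_mul]
    apply Finset.sum_congr rfl
    intro p hp
    simp only [Finset.HasAntidiagonal.mem_antidiagonal] at hp
    rw [hp]
  rw [Finset.sum_congr rfl lhs_eq, reshape n _ ?hvan]
  case hvan =>
    intro p hp
    rw [coeff_SS_pow, if_neg (by omega), mul_zero]
  simp only
  symm
  calc ∑ p ∈ Finset.HasAntidiagonal.antidiagonal n,
        PowerSeries.coeff p.1 (shiftPS a f) * PowerSeries.coeff p.2 (shiftPS a g)
      = ∑ p ∈ Finset.HasAntidiagonal.antidiagonal n, ∑ i ∈ range (n+1), ∑ j ∈ range (n+1),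
          (PowerSeries.coeff i f * PowerSeries.coeff p.1 ((SS a)^i))
            * (PowerSeries.coeff j g * PowerSeries.coeff p.2 ((SS a)^j)) := by
        apply Finset.sum_congr rfl
        intro p hp
        simp only [Finset.HasAntidiagonal.mem_antidiagonal] at hp
        rw [coeff_shift' a f (show p.1 ≤ n by omega), coeff_shift' a g (show p.2 ≤ n by omega),
          Finset.sum_mul_sum]
    _ = ∑ i ∈ range (n+1), ∑ j ∈ range (n+1), ∑ p ∈ Finset.HasAntidiagonal.antidiagonal n,
          (PowerSeries.coeff i f * PowerSeries.coeff p.1 ((SS a)^i))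
            * (PowerSeries.coeff j g * PowerSeries.coeff p.2 ((SS a)^j)) := by
        rw [Finset.sum_comm]
        exact Finset.sum_congr rfl fun i _ => by rw [Finset.sum_comm]
    _ = ∑ i ∈ range (n+1), ∑ j ∈ range (n+1),
          PowerSeries.coeff i f * PowerSeries.coeff j g
            * PowerSeries.coeff n ((SS a)^(i+j)) := by
        apply Finset.sum_congr rfl
        intro i _
        apply Finset.sum_congr rfl
        intro j _
        rw [pow_add, PowerSeries.coeff_mul, Finset.mul_sum]
        apply Finset.sum_congr rfl
        intro p _
        ring

-- new material
noncomputable def shiftHom (a : ℂ) : PowerSeries ℂ →+* PowerSeries ℂ where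
  toFun := shiftPS a
  map_one' := shift_one a
  map_mul' := shift_mul a
  map_zero' := shift_zero a
  map_add' := shift_add a

lemma constantCoeff_SS (a : ℂ) : PowerSeries.constantCoeff (SS a) = 0 := by
  rw [← PowerSeries.coeff_zero_eq_constantCoeff, coeff_SS]
  simp

lemma SS_mul (a : ℂ) : SS a * (1 + PowerSeries.C a * PowerSeries.X) = PowerSeries.X := by
  have h0 : SS a * (1 + PowerSeries.C a * PowerSeries.X)
      = SS a + PowerSeries.C a * (SS a * PowerSeries.X) := by ring
  rw [h0]
  ext n
  rcases n with _ | m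
  · simp [constantCoeff_SS]
  · rw [map_add, PowerSeries.coeff_C_mul, PowerSeries.coeff_succ_mul_X, coeff_SS, coeff_SS,
      PowerSeries.coeff_X]
    rcases m with _ | l
    · simp
    · rw [if_neg (by omega : ¬ l + 1 + 1 = 0), if_neg (by omega : ¬ l + 1 = 0),
        if_neg (by omega : ¬ l + 1 + 1 = 1)]
      simp only [Nat.add_sub_cancel]
      ring

lemma one_add_CX_ne (a : ℂ) (h : a ≠ 0) : True := trivial

lemma unit_ne_zero (h : PowerSeries ℂ) (hh : PowerSeries.constantCoeff h = 1) : h ≠ 0 := by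
  intro hz
  rw [hz, map_zero] at hh
  exact zero_ne_one hh

lemma shift_SS (a b : ℂ) : shiftPS a (SS b) = SS (a + b) := by
  have E1 : shiftPS a (SS b) * (1 + PowerSeries.C b * SS a) = SS a := by
    have := congrArg (shiftPS a) (SS_mul b)
    rwa [shift_mul, shift_add, shift_one, shift_C_mul, shift_X] at this
  have E2 : SS (a + b) * (1 + PowerSeries.C b * SS a) = SS a := by
    have key : (1 + PowerSeries.C b * SS a) * (1 + PowerSeries.C a * PowerSeries.X)
        = 1 + PowerSeries.C (a + b) * PowerSeries.X := by
      have : (1 + PowerSeries.C b * SS a) * (1 + PowerSeries.C a * PowerSeries.X)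
          = 1 + PowerSeries.C a * PowerSeries.X
              + PowerSeries.C b * (SS a * (1 + PowerSeries.C a * PowerSeries.X)) := by ring
      rw [this, SS_mul, map_add]
      ring
    have h2 : SS (a+b) * (1 + PowerSeries.C b * SS a) * (1 + PowerSeries.C a * PowerSeries.X)
        = SS a * (1 + PowerSeries.C a * PowerSeries.X) := by
      rw [mul_assoc, key, SS_mul, SS_mul]
    have hu : (1 + PowerSeries.C a * PowerSeries.X : PowerSeries ℂ) ≠ 0 := by
      apply unit_ne_zero
      rw [map_add, map_one, map_mul, PowerSeries.constantCoeff_X, mul_zero, add_zero]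
    exact mul_right_cancel₀ hu h2
  have hu2 : (1 + PowerSeries.C b * SS a : PowerSeries ℂ) ≠ 0 := by
    apply unit_ne_zero
    rw [map_add, map_one, map_mul]
    rw [constantCoeff_SS]
    ring
  exact mul_right_cancel₀ hu2 (E1.trans E2.symm)

lemma shift_SS_pow (a b : ℂ) (i : ℕ) : shiftPS a ((SS b)^i) = (SS (a+b))^i := by
  rw [show shiftPS a ((SS b)^i) = shiftHom a ((SS b)^i) from rfl, map_pow]
  rw [show (shiftHom a) (SS b) = shiftPS a (SS b) from rfl, shift_SS]

lemma shift_comp (a b : ℂ) (f : PowerSeries ℂ) :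
    shiftPS a (shiftPS b f) = shiftPS (a + b) f := by
  ext n
  rw [coeff_shift, coeff_shift]
  have step1 : ∀ j ∈ range (n+1),
      PowerSeries.coeff j (shiftPS b f) * PowerSeries.coeff n ((SS a)^j)
        = ∑ i ∈ range (n+1), PowerSeries.coeff i f
            * (PowerSeries.coeff j ((SS b)^i) * PowerSeries.coeff n ((SS a)^j)) := by
    intro j hj
    simp only [Finset.mem_range] at hj
    rw [coeff_shift' b f (show j ≤ n by omega), Finset.sum_mul]
    exact Finset.sum_congr rfl fun i _ => by ring
  rw [Finset.sum_congr rfl step1, Finset.sum_comm]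
  apply Finset.sum_congr rfl
  intro i _
  rw [← Finset.mul_sum]
  congr 1
  rw [← shift_SS_pow a b i, coeff_shift' a ((SS b)^i) (le_refl n)]

lemma shift_zero_a (f : PowerSeries ℂ) : shiftPS 0 f = f := by
  ext n
  rw [coeff_shift]
  rw [Finset.sum_eq_single n]
  · rw [coeff_SS_pow, if_pos (le_refl n)]
    simp
  · intro i hi hne
    simp only [Finset.mem_range] at hi
    rw [coeff_SS_pow, if_pos (by omega)]
    rw [neg_zero, zero_pow (by omega : n - i ≠ 0)]
    ring
  · intro h
    simp at h

lemma shift_constantCoeff (a : ℂ) (f : PowerSeries ℂ) :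
    PowerSeries.constantCoeff (shiftPS a f) = PowerSeries.constantCoeff f := by
  rw [← PowerSeries.coeff_zero_eq_constantCoeff, coeff_shift]
  simp [← PowerSeries.coeff_zero_eq_constantCoeff]

@[simp] lemma shiftHom_apply (a : ℂ) (f : PowerSeries ℂ) : shiftHom a f = shiftPS a f := rfl

-- uniqueness
lemma uniq (h1 h2 : PowerSeries ℂ)
    (e1 : shiftPS 1 h1 = h1 * (1 - PowerSeries.X ^ 2))
    (e2 : shiftPS 1 h2 = h2 * (1 - PowerSeries.X ^ 2))
    (h0 : PowerSeries.coeff 0 h1 = PowerSeries.coeff 0 h2) : h1 = h2 := by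
  have hrec : ∀ (m : ℕ) (h : PowerSeries ℂ), shiftPS 1 h = h * (1 - PowerSeries.X ^ 2) →
      ((m : ℂ) + 1) * PowerSeries.coeff (m+1) h
        = PowerSeries.coeff m h
          + ∑ i ∈ range (m+1), PowerSeries.coeff i h * (-1 : ℂ)^(m+2-i)
              * ((m+1).choose (m+2-i) : ℂ) := by
    intro m h e
    have hc := congrArg (PowerSeries.coeff (m+2)) e
    rw [shiftPS, PowerSeries.coeff_mk, Finset.sum_range_succ, Finset.sum_range_succ] at hc
    have hr : PowerSeries.coeff (m+2) (h * (1 - PowerSeries.X ^ 2))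
        = PowerSeries.coeff (m+2) h - PowerSeries.coeff m h := by
      rw [mul_sub, mul_one, map_sub]
      congr 1
      exact PowerSeries.coeff_mul_X_pow h 2 m
    rw [hr] at hc
    have e1' : m + 2 - (m + 2) = 0 := by omega
    have e2' : m + 2 - (m + 1) = 1 := by omega
    have e3' : m + 2 - 1 = m + 1 := by omega
    rw [e1', e2', e3'] at hc
    simp only [pow_zero, pow_one, Nat.choose_zero_right, Nat.choose_one_right,
      Nat.cast_one, mul_one, Nat.cast_add] at hc
    push_cast at hc ⊢
    linear_combination -hc
  ext n
  induction n using Nat.strong_induction_on with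
  | _ n ih =>
    match n, ih with
    | 0, _ => exact h0
    | (m+1), ih =>
      have r1 := hrec m h1 e1
      have r2 := hrec m h2 e2
      have hsum : ∑ i ∈ range (m+1), PowerSeries.coeff i h1 * (-1:ℂ)^(m+2-i)
              * ((m+1).choose (m+2-i) : ℂ)
          = ∑ i ∈ range (m+1), PowerSeries.coeff i h2 * (-1:ℂ)^(m+2-i)
              * ((m+1).choose (m+2-i) : ℂ) := by
        apply Finset.sum_congr rfl
        intro i hi
        simp only [Finset.mem_range] at hi
        rw [ih i (by omega)]
      rw [ih m (by omega), hsum, ← r2] at r1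
      exact mul_left_cancel₀ (Nat.cast_add_one_ne_zero m) r1

/-- Product formula: the unique `g(u) = 1 + ⋯` with `g(u+N) = g(u)(1-u^{-2})`
satisfies `g(u) g(u+1) ⋯ g(u+N-1) = (1-u^{-1})^{-1}`. -/
theorem product_formula_g (N : ℕ) (hN : 0 < N) (g : PowerSeries ℂ)
    (hg0 : PowerSeries.constantCoeff g = 1)
    (hg : shiftPS (N : ℂ) g = g * (1 - PowerSeries.X ^ 2)) :
    (∏ k ∈ Finset.range N, shiftPS (k : ℂ) g) = (1 - PowerSeries.X : PowerSeries ℂ)⁻¹ := by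
  set P := ∏ k ∈ Finset.range N, shiftPS (k : ℂ) g with hPdef
  set Q := (1 - PowerSeries.X : PowerSeries ℂ)⁻¹ with hQdef
  have hgne : g ≠ 0 := unit_ne_zero g hg0
  -- step 1 : functional equation for P
  have hshiftP : shiftPS 1 P = ∏ k ∈ Finset.range N, shiftPS (((k+1 : ℕ)) : ℂ) g := by
    rw [hPdef, ← shiftHom_apply, map_prod]
    apply Finset.prod_congr rfl
    intro k _
    rw [shiftHom_apply, shift_comp]
    congr 1
    push_cast
    ring
  have tele : shiftPS 1 P * g = P * shiftPS (N : ℂ) g := by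
    have l1 : ∏ k ∈ Finset.range (N+1), shiftPS (k : ℂ) g = P * shiftPS (N : ℂ) g :=
      Finset.prod_range_succ _ N
    have l2 : ∏ k ∈ Finset.range (N+1), shiftPS (k : ℂ) g
        = (∏ k ∈ Finset.range N, shiftPS (((k+1:ℕ)) : ℂ) g) * shiftPS ((0:ℕ) : ℂ) g :=
      Finset.prod_range_succ' _ N
    rw [Nat.cast_zero, shift_zero_a] at l2
    rw [hshiftP, ← l2, l1]
  have hPfe : shiftPS 1 P = P * (1 - PowerSeries.X ^ 2) := by
    apply mul_right_cancel₀ hgne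
    rw [tele, hg]
    ring
  -- step 2 : functional equation for Q
  have hc1X : PowerSeries.constantCoeff (1 - PowerSeries.X : PowerSeries ℂ) = 1 := by simp
  have hQunit : (1 - PowerSeries.X : PowerSeries ℂ) * Q = 1 :=
    PowerSeries.mul_inv_cancel _ (by rw [hc1X]; exact one_ne_zero)
  have s1 : SS 1 * (1 + PowerSeries.X) = PowerSeries.X := by
    have := SS_mul 1
    rwa [map_one, one_mul] at this
  have h1X : (1 + PowerSeries.X : PowerSeries ℂ) * (1 - SS 1) = 1 := by
    linear_combination -s1
  have hshQ : shiftPS 1 Q * (1 - SS 1) = 1 := by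
    have := congrArg (shiftPS 1) hQunit
    rwa [shift_mul, shift_one, ← shiftHom_apply (1 : ℂ) (1 - PowerSeries.X), map_sub,
      map_one, shiftHom_apply, shift_X, mul_comm] at this
  have hSS1ne : (1 - SS 1 : PowerSeries ℂ) ≠ 0 := by
    apply unit_ne_zero
    rw [map_sub, map_one, constantCoeff_SS, sub_zero]
  have hshQ' : shiftPS 1 Q = 1 + PowerSeries.X := by
    apply mul_right_cancel₀ hSS1ne
    rw [hshQ, h1X]
  have hQfe : shiftPS 1 Q = Q * (1 - PowerSeries.X ^ 2) := by
    rw [hshQ']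
    have : Q * (1 - PowerSeries.X ^ 2)
        = ((1 - PowerSeries.X) * Q) * (1 + PowerSeries.X) := by ring
    rw [this, hQunit, one_mul]
  -- step 3 : constant coefficients
  have hP0 : PowerSeries.coeff 0 P = PowerSeries.coeff 0 Q := by
    rw [PowerSeries.coeff_zero_eq_constantCoeff_apply, PowerSeries.coeff_zero_eq_constantCoeff_apply,
      hPdef, hQdef, map_prod, PowerSeries.constantCoeff_inv]
    rw [hc1X, inv_one]
    apply Finset.prod_eq_one
    intro k _
    rw [shift_constantCoeff, hg0]
  exact uniq P Q hPfe hQfe hP0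
end

section
/- The first three coefficients of the unique formal power series g(u) = 1 + g_1 u^{-1} + g_2 u^{-2} + g_3 u^{-3} + \cdots satisfying g(u+N)=g(u)(1-u^{-2}) are g_1 = 1/N, g_2 = (N^2+1)/(2N^2), and g_3 = (N^4 + 4N^2 + 1)/(6N^3). -/
/-- The first three coefficients of the unique series `g(u) = 1 + g₁u⁻¹ + g₂u⁻² + ⋯`
satisfying `g(u+N) = g(u)(1-u^{-2})` are `1/N`, `(N²+1)/(2N²)`, `(N⁴+4N²+1)/(6N³)`. -/
theorem first_coefficients_g (N : ℕ) (hN : 0 < N) (g : PowerSeries ℂ)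
    (hg0 : PowerSeries.constantCoeff g = 1)
    (hg : shiftPS (N : ℂ) g = g * (1 - PowerSeries.X ^ 2)) :
    PowerSeries.coeff 1 g = 1 / (N : ℂ) ∧
    PowerSeries.coeff 2 g = ((N : ℂ) ^ 2 + 1) / (2 * (N : ℂ) ^ 2) ∧
    PowerSeries.coeff 3 g = ((N : ℂ) ^ 4 + 4 * (N : ℂ) ^ 2 + 1) / (6 * (N : ℂ) ^ 3) := by
  have hN' : (N : ℂ) ≠ 0 := Nat.cast_ne_zero.mpr hN.ne'
  have h2 := congrArg (PowerSeries.coeff 2) hg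
  have h3 := congrArg (PowerSeries.coeff 3) hg
  have h4 := congrArg (PowerSeries.coeff 4) hg
  simp [shiftPS, Finset.sum_range_succ, mul_sub, mul_one, PowerSeries.coeff_mul_X_pow',
    PowerSeries.coeff_zero_eq_constantCoeff, hg0] at h2 h3 h4
  have hc1 : PowerSeries.coeff 1 g = 1 / (N : ℂ) := by
    field_simp
    linear_combination -h2
  have hc2 : PowerSeries.coeff 2 g = ((N : ℂ) ^ 2 + 1) / (2 * (N : ℂ) ^ 2) := by
    field_simp
    linear_combination -(N:ℂ) * h3 - ((N:ℂ)^2 + 1) * h2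
  have hc3 : PowerSeries.coeff 3 g = ((N : ℂ) ^ 4 + 4 * (N : ℂ) ^ 2 + 1) / (6 * (N : ℂ) ^ 3) := by
    field_simp
    linear_combination (-2*(N:ℂ)^2) * h4 - ((N:ℂ)*(3*(N:ℂ)^2+1)) * h3 - (((N:ℂ)^4+4*(N:ℂ)^2+1)) * h2
  exact ⟨hc1, hc2, hc3⟩
end

section
/- The center \mathfrak{z}(V) = \{v \in V : w_r v = 0 \text{ for all } w \in V, r \ge 0\} of a quantum vertex algebra V is closed under all s-products: if w, u \in \mathfrak{z}(V) and v \in V, s \in \mathbb{Z}, then w_s u \in \mathfrak{z}(V). -/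
noncomputable section

/- A quantum vertex algebra over `ℂ[[h]]` (here `R = PowerSeries ℂ`, `h = X`),
recorded through the coefficients of its structure maps: `Y v w r` stands for
the `r`-th product `v_r w`, so that `Y(v,z)w = ∑_r (v_r w) z^{-r-1}`. -/
structure QuantumVertexAlgebra (V : Type*) [AddCommGroup V]
    [Module (PowerSeries ℂ) V] where
  /-- the products `v_r w` -/
  Y : V → V → ℤ → V
  Y_add_left : ∀ v v' w r, Y (v + v') w r = Y v w r + Y v' w r
  Y_add_right : ∀ v w w' r, Y v (w + w') r = Y v w r + Y v w' r
  Y_smul_left : ∀ (c : PowerSeries ℂ) v w r, Y (c • v) w r = c • Y v w r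
  Y_smul_right : ∀ (c : PowerSeries ℂ) v w r, Y v (c • w) r = c • Y v w r
  /-- `Y(v,z)w ∈ V_h((z))`: h-adic truncation -/
  trunc : ∀ v w (n : ℕ), ∃ s : ℤ, ∀ r : ℤ, s ≤ r →
    ∃ y : V, Y v w r = (PowerSeries.X ^ n : PowerSeries ℂ) • y
  /-- the vacuum vector -/
  vac : V
  /-- `Y(𝟙,z)v = v` -/
  vac_left : ∀ v (r : ℤ), Y vac v r = if r = -1 then v else 0
  /-- `Y(v,z)𝟙` is a Taylor series in `z` -/
  vac_right_pos : ∀ v (r : ℤ), 0 ≤ r → Y v vac r = 0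
  /-- `Y(v,z)𝟙|_{z=0} = v` -/
  vac_create : ∀ v, Y v vac (-1) = v
  /-- the translation operator -/
  D : V → V
  D_add : ∀ v w, D (v + w) = D v + D w
  D_smul : ∀ (c : PowerSeries ℂ) v, D (c • v) = c • D v
  /-- `D 𝟙 = 0` -/
  D_vac : D vac = 0
  /-- `(d/dz) Y(v,z) = [D, Y(v,z)]` in components -/
  D_bracket : ∀ v w (r : ℤ), D (Y v w r) - Y v (D w) r = (-r : ℤ) • Y v w (r - 1)
  /-- `V` is h-adically separated (topologically free) -/
  sep : ∀ x : V, (∀ n : ℕ, ∃ y : V, x = (PowerSeries.X ^ n : PowerSeries ℂ) • y) → x = 0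

variable {V : Type*} [AddCommGroup V] [Module (PowerSeries ℂ) V]

/-- The center `𝔷(V) = {v : w_r v = 0 for all w ∈ V, r ≥ 0}`. -/
def QuantumVertexAlgebra.center (Q : QuantumVertexAlgebra V) : Set V :=
  {v | ∀ w : V, ∀ r : ℤ, 0 ≤ r → Q.Y w v r = 0}

/-- Generalized binomial coefficient `C(z, k)` for `z : ℤ`. -/
def zchoose (z : ℤ) (k : ℕ) : ℤ :=
  if 0 ≤ z then (z.toNat.choose k : ℤ) else (-1) ^ k * (((-z).toNat + k - 1).choose k : ℤ)

/-- Coefficient of `z₀^a z₂^b` in `Y(v, z₀+z₂) Y(w, z₂) u`, where `(z₀+z₂)^{-r-1}`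
is expanded in nonnegative powers of `z₂`.  When `u` lies in the center, the
relevant sum is finite and equals the sum below over the window
`-a-b-1 ≤ r ≤ -a-1`. -/
def lhsCoeff (Q : QuantumVertexAlgebra V) (v w u : V) (a b : ℤ) : V :=
  ∑ r ∈ Finset.Icc (-a - b - 1) (-a - 1),
    zchoose (-r - 1) (-a - r - 1).toNat • Q.Y v (Q.Y w u (-a - r - 2 - b)) r

/-- Coefficient of `z₀^a z₂^b` in `Y(Y(v,z₀)w, z₂) u`. -/
def rhsCoeff (Q : QuantumVertexAlgebra V) (v w u : V) (a b : ℤ) : V :=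
  Q.Y (Q.Y v w (-a - 1)) u (-b - 1)

lemma QVA_Y_zero_left (Q : QuantumVertexAlgebra V) (w : V) (r : ℤ) :
    Q.Y 0 w r = 0 := by
  have h := Q.Y_smul_left 0 0 w r
  simpa using h

lemma QVA_Y_zero_right (Q : QuantumVertexAlgebra V) (v : V) (r : ℤ) :
    Q.Y v 0 r = 0 := by
  have h := Q.Y_smul_right 0 v 0 r
  simpa using h

lemma zchoose_zero_right (z : ℤ) : zchoose z 0 = 1 := by
  unfold zchoose
  split <;> simp

lemma zchoose_eq_zero {z : ℤ} {k : ℕ} (h0 : 0 ≤ z) (h1 : z < k) :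
    zchoose z k = 0 := by
  unfold zchoose
  rw [if_pos h0, Nat.choose_eq_zero_of_lt (by omega)]
  simp

/-- The center of a quantum vertex algebra is closed under all `s`-products:
if `w, u ∈ 𝔷(V)` and `s ∈ ℤ` then `w_s u ∈ 𝔷(V)`.  (One may use the strong
associativity `Y(v,z₀+z₂)Y(w,z₂)u = Y(Y(v,z₀)w,z₂)u`, valid for `w, u ∈ 𝔷(V)`;
it is supplied here coefficientwise as the hypothesis `hSA`.) -/
theorem center_closed_under_products (Q : QuantumVertexAlgebra V)
    (hSA : ∀ v w u : V, w ∈ Q.center → u ∈ Q.center →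
      ∀ a b : ℤ, lhsCoeff Q v w u a b = rhsCoeff Q v w u a b) :
    ∀ w u : V, w ∈ Q.center → u ∈ Q.center → ∀ s : ℤ, Q.Y w u s ∈ Q.center := by
  intro w u hw hu s
  -- key claim: for every b : ℕ, x, r ≥ 0, we have x_r (w_{-b-1} u) = 0
  have key : ∀ b : ℕ, ∀ x : V, ∀ r : ℤ, 0 ≤ r →
      Q.Y x (Q.Y w u (-(b : ℤ) - 1)) r = 0 := by
    intro b
    induction b using Nat.strong_induction_on with
    | _ b IH =>
      intro x r hr
      have E := hSA x w u hw hu (-r - 1) (b : ℤ)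
      unfold lhsCoeff rhsCoeff at E
      -- the right-hand side vanishes since x_r w = 0 (w is central)
      have hrhs : Q.Y (Q.Y x w (-(-r - 1) - 1)) u (-(b : ℤ) - 1) = 0 := by
        have hxw : Q.Y x w (-(-r - 1) - 1) = 0 := by
          have := hw x (-(-r - 1) - 1) (by omega)
          exact this
        rw [hxw, QVA_Y_zero_left]
      rw [hrhs] at E
      -- rewrite the interval bounds
      have hIcc : Finset.Icc (-(-r - 1) - (b : ℤ) - 1) (-(-r - 1) - 1)
          = Finset.Icc (r - (b : ℤ)) r := by
        congr 1 <;> ring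
      rw [hIcc] at E
      -- the sum reduces to the single term at ρ = r
      have hsum : ∑ ρ ∈ Finset.Icc (r - (b : ℤ)) r,
          zchoose (-ρ - 1) (-(-r - 1) - ρ - 1).toNat •
            Q.Y x (Q.Y w u (-(-r - 1) - ρ - 2 - (b : ℤ))) ρ
          = Q.Y x (Q.Y w u (-(b : ℤ) - 1)) r := by
        rw [Finset.sum_eq_single_of_mem r (by simp only [Finset.mem_Icc]; omega)]
        · -- value of the top term
          have h1 : (-(-r - 1) - r - 1).toNat = 0 := by omega
          have h2 : (-(-r - 1) - r - 2 - (b : ℤ)) = -(b : ℤ) - 1 := by ring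
          rw [h1, h2, zchoose_zero_right, one_smul]
        · -- all other terms vanish
          intro ρ hρ hne
          rw [Finset.mem_Icc] at hρ
          rcases lt_or_ge ρ 0 with hneg | hpos
          · -- negative outer index: the binomial coefficient vanishes
            have hc : zchoose (-ρ - 1) (-(-r - 1) - ρ - 1).toNat = 0 := by
              apply zchoose_eq_zero (by omega)
              omega
            rw [hc, zero_smul]
          · -- nonnegative outer index: use the induction hypothesis
            have hρr : ρ < r := lt_of_le_of_ne hρ.2 hne
            set k : ℕ := ((b : ℤ) - r + ρ).toNat with hk
            have hk1 : (k : ℤ) = (b : ℤ) - r + ρ := by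
              rw [hk]; omega
            have hk2 : k < b := by omega
            have hidx : (-(-r - 1) - ρ - 2 - (b : ℤ)) = -(k : ℤ) - 1 := by
              rw [hk1]; ring
            rw [hidx, IH k hk2 x ρ hpos, smul_zero]
      rw [hsum] at E
      exact E
  -- now conclude
  intro x r hr
  rcases le_or_gt 0 s with hs | hs
  · rw [hu w s hs, QVA_Y_zero_right]
  · have hb : s = -(((-s - 1).toNat : ℕ) : ℤ) - 1 := by omega
    rw [hb]
    exact key (-s - 1).toNat x r hr

end
end

section
/- For elements v \in V and w, u in the center \mathfrak{z}(V) of a quantum vertex algebra V, weak associativity upgrades to strong associativity: Y(v, z_0+z_2) Y(w,z_2) u = Y(Y(v,z_0)w, z_2) u as an identity of formal series. -/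
noncomputable section

variable {V : Type*} [AddCommGroup V] [Module (PowerSeries ℂ) V]

/-- For `v ∈ V` and `w, u` in the center of a quantum vertex algebra, weak
associativity upgrades to strong associativity
`Y(v,z₀+z₂)Y(w,z₂)u = Y(Y(v,z₀)w,z₂)u`, stated coefficientwise.  The hypothesis
`hWA` is weak associativity: for every `n` there is `ℓ ≥ 0` such that all
coefficients of `(z₀+z₂)^ℓ (Y(v,z₀+z₂)Y(w,z₂)u - Y(Y(v,z₀)w,z₂)u)` lie in
`h^n V`. -/
theorem weak_to_strong_associativity (Q : QuantumVertexAlgebra V)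
    (v w u : V) (hw : w ∈ Q.center) (hu : u ∈ Q.center)
    (hWA : ∀ n : ℕ, ∃ ℓ : ℕ, ∀ a b : ℤ, ∃ y : V,
      (∑ j ∈ Finset.range (ℓ + 1), (ℓ.choose j : ℤ) •
        (lhsCoeff Q v w u (a - j) (b - ((ℓ : ℤ) - j)) -
          rhsCoeff Q v w u (a - j) (b - ((ℓ : ℤ) - j)))) =
        (PowerSeries.X ^ n : PowerSeries ℂ) • y) :
    ∀ a b : ℤ, lhsCoeff Q v w u a b = rhsCoeff Q v w u a b := by
  -- abbreviation for the difference
  set d : ℤ → ℤ → V := fun a b => lhsCoeff Q v w u a b - rhsCoeff Q v w u a b with hd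
  suffices h : ∀ a b : ℤ, d a b = 0 by
    intro a b
    have := h a b
    simp only [hd] at this
    exact sub_eq_zero.mp this
  -- vanishing for negative b
  have dzero : ∀ a b : ℤ, b < 0 → d a b = 0 := by
    intro a b hb
    have h1 : lhsCoeff Q v w u a b = 0 := by
      unfold lhsCoeff
      rw [Finset.Icc_eq_empty (by omega), Finset.sum_empty]
    have h2 : rhsCoeff Q v w u a b = 0 := hu _ (-b - 1) (by omega)
    simp [hd, h1, h2]
  -- main induction
  have key : ∀ n : ℕ, ∀ m : ℕ, ∀ a b : ℤ, b < (m : ℤ) →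
      ∃ y : V, d a b = (PowerSeries.X ^ n : PowerSeries ℂ) • y := by
    intro n
    obtain ⟨ℓ, hℓ⟩ := hWA n
    set M : Submodule (PowerSeries ℂ) V :=
      LinearMap.range (LinearMap.lsmul (PowerSeries ℂ) V (PowerSeries.X ^ n)) with hM
    have memM : ∀ x : V, x ∈ M ↔ ∃ y : V, x = (PowerSeries.X ^ n : PowerSeries ℂ) • y := by
      intro x
      constructor
      · rintro ⟨y, rfl⟩; exact ⟨y, rfl⟩
      · rintro ⟨y, rfl⟩; exact ⟨y, rfl⟩
    intro m
    induction m with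
    | zero =>
      intro a b hb
      exact ⟨0, by rw [dzero a b (by exact_mod_cast hb), smul_zero]⟩
    | succ m ih =>
      intro a b hb
      by_cases hbm : b < (m : ℤ)
      · exact ih a b hbm
      · have hbm' : b = (m : ℤ) := by push_cast at hb ⊢; omega
        obtain ⟨y, hy⟩ := hℓ (a + ℓ) b
        rw [Finset.sum_range_succ] at hy
        have e1 : a + (ℓ : ℤ) - (ℓ : ℤ) = a := by ring
        have e2 : b - ((ℓ : ℤ) - (ℓ : ℤ)) = b := by ring
        rw [e1, e2, Nat.choose_self] at hy
        have hy' : d a b = (PowerSeries.X ^ n : PowerSeries ℂ) • y -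
            ∑ j ∈ Finset.range ℓ, (ℓ.choose j : ℤ) • d (a + ℓ - j) (b - ((ℓ : ℤ) - j)) := by
          simp only [hd]
          rw [← hy]
          push_cast
          abel
        rw [(memM _).symm] at *
        rw [hy']
        refine Submodule.sub_mem M ⟨y, rfl⟩ (Submodule.sum_mem M ?_)
        intro j hj
        have hj' : (j : ℤ) < (ℓ : ℤ) := by exact_mod_cast Finset.mem_range.mp hj
        have hb' : b - ((ℓ : ℤ) - j) < (m : ℤ) := by omega
        obtain ⟨z, hz⟩ := ih (a + ℓ - j) (b - ((ℓ : ℤ) - j)) hb'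
        exact zsmul_mem ((memM _).mpr ⟨z, hz⟩) _
  -- conclude via separation
  intro a b
  apply Q.sep
  intro n
  exact key n (b.toNat + 1) a b (by omega)

end
end

section
/- Let A^{(m)} denote the image in (\operatorname{End}\mathbb{C}^N)^{\otimes m} of the antisymmetrizer a^{(m)} = \frac{1}{m!}\sum_{s \in S_m} \operatorname{sgn}(s)\, s under the permutation action of S_m on (\mathbb{C}^N)^{\otimes m}. Then A^{(N)} R_{0N}(v+N-1) R_{0\,N-1}(v+N-2) \cdots R_{01}(v) = A^{(N)} (1 - v^{-1}), where R_{0a}(u) = 1 - P_{0a} u^{-1} acts on an auxiliary copy 0 of \mathbb{C}^N and the a-th factor. -/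
noncomputable section
open scoped Classical

/- Operators on `(ℂ^N)^{⊗(N+1)}`, with factors labelled `0, 1, …, N`, are
modelled as matrices indexed by `Fin N × (Fin N → Fin N)`: the first component
is the auxiliary factor `0`, the second records factors `1, …, N`. -/
abbrev IdxA (N : ℕ) := Fin N × (Fin N → Fin N)

/-- The permutation operator `P_{0a}` exchanging factor `0` and factor `a`. -/
def P0 (N : ℕ) (a : Fin N) : Matrix (IdxA N) (IdxA N) ℂ := fun p q =>
  if p.1 = q.2 a ∧ q.1 = p.2 a ∧ (∀ b : Fin N, b ≠ a → p.2 b = q.2 b) then 1 else 0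

/-- The Yang R-matrix `R_{0a}(u) = 1 - P_{0a} u⁻¹`. -/
def R0 (N : ℕ) (a : Fin N) (u : ℂ) : Matrix (IdxA N) (IdxA N) ℂ :=
  1 - u⁻¹ • P0 N a

/-- The operator on factors `1, …, N` induced by a permutation `σ ∈ S_N`. -/
def Pperm (N : ℕ) (σ : Equiv.Perm (Fin N)) : Matrix (IdxA N) (IdxA N) ℂ := fun p q =>
  if p.1 = q.1 ∧ (∀ b : Fin N, p.2 b = q.2 (σ b)) then 1 else 0

/-- The antisymmetrizer `A^{(N)} = (1/N!) ∑_{s ∈ S_N} sgn(s) s` acting on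
factors `1, …, N` (identity on factor `0`). -/
def AsymN (N : ℕ) : Matrix (IdxA N) (IdxA N) ℂ :=
  (N.factorial : ℂ)⁻¹ •
    ∑ σ : Equiv.Perm (Fin N), ((Equiv.Perm.sign σ : ℤ) : ℂ) • Pperm N σ

namespace Fuse

variable {N : ℕ}

/-- permutation matrix attached to a permutation of indices -/
def Mp (e : Equiv.Perm (IdxA N)) : Matrix (IdxA N) (IdxA N) ℂ :=
  fun p q => if q = e p then 1 else 0

lemma Mp_mul (e f : Equiv.Perm (IdxA N)) : Mp e * Mp f = Mp (e.trans f) := by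
  ext p q
  simp only [Matrix.mul_apply, Mp, ite_mul, one_mul, zero_mul]
  rw [Finset.sum_ite_eq' Finset.univ (e p) (fun r => if q = f r then (1:ℂ) else 0)]
  simp [Equiv.trans_apply]
  congr 1

lemma mul_Mp_apply (X : Matrix (IdxA N) (IdxA N) ℂ) (e : Equiv.Perm (IdxA N))
    (p q : IdxA N) : (X * Mp e) p q = X p (e.symm q) := by
  simp only [Matrix.mul_apply, Mp, mul_ite, mul_one, mul_zero]
  have h : ∀ r : IdxA N, (q = e r) ↔ (r = e.symm q) := by
    intro r; constructor
    · rintro rfl; simp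
    · rintro rfl; simp
  simp_rw [h]
  rw [Finset.sum_ite_eq' Finset.univ (e.symm q) (fun r => X p r)]
  simp

def tEquiv (a : Fin N) : Equiv.Perm (IdxA N) :=
  Function.Involutive.toPerm (fun p => (p.2 a, Function.update p.2 a p.1)) (by
    intro p
    ext
    · simp
    · simp [Function.update_idem])

@[simp] lemma tEquiv_apply (a : Fin N) (p : IdxA N) :
    tEquiv a p = (p.2 a, Function.update p.2 a p.1) := rfl

@[simp] lemma tEquiv_symm (a : Fin N) : (tEquiv a).symm = tEquiv a := rfl

def sEquiv (σ : Equiv.Perm (Fin N)) : Equiv.Perm (IdxA N) :=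
  (Equiv.refl (Fin N)).prodCongr (σ.arrowCongr (Equiv.refl (Fin N)))

@[simp] lemma sEquiv_apply (σ : Equiv.Perm (Fin N)) (p : IdxA N) :
    sEquiv σ p = (p.1, fun c => p.2 (σ.symm c)) := rfl

lemma P0_eq (a : Fin N) : P0 N a = Mp (tEquiv a) := by
  ext p q
  simp only [P0, Mp, tEquiv_apply]
  congr 1
  rw [eq_iff_iff, Prod.ext_iff]
  constructor
  · rintro ⟨h1, h2, h3⟩
    refine ⟨h2, ?_⟩
    rw [Function.eq_update_iff]
    exact ⟨h1.symm, fun x hx => (h3 x hx).symm⟩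
  · rintro ⟨h1, h2⟩
    rw [Function.eq_update_iff] at h2
    exact ⟨h2.1.symm, h1, fun b hb => (h2.2 b hb).symm⟩

lemma Pperm_eq (σ : Equiv.Perm (Fin N)) : Pperm N σ = Mp (sEquiv σ) := by
  ext p q
  simp only [Pperm, Mp, sEquiv_apply]
  congr 1
  rw [eq_iff_iff, Prod.ext_iff]
  constructor
  · rintro ⟨h1, h2⟩
    refine ⟨h1.symm, funext fun c => ?_⟩
    show q.2 c = p.2 (σ.symm c)
    rw [h2 (σ.symm c), Equiv.apply_symm_apply]
  · rintro ⟨h1, h2⟩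
    refine ⟨h1.symm, fun b => ?_⟩
    rw [h2]
    show p.2 b = p.2 (σ.symm (σ b))
    rw [Equiv.symm_apply_apply]


def sgnC (σ : Equiv.Perm (Fin N)) : ℂ := ((Equiv.Perm.sign σ : ℤ) : ℂ)

lemma sgnC_mul (σ τ : Equiv.Perm (Fin N)) : sgnC (σ * τ) = sgnC σ * sgnC τ := by
  simp [sgnC]

lemma sEquiv_trans (σ τ : Equiv.Perm (Fin N)) :
    (sEquiv σ).trans (sEquiv τ) = sEquiv (τ * σ) := by
  apply Equiv.ext
  intro p
  simp only [Equiv.trans_apply, sEquiv_apply]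
  refine Prod.ext rfl ?_
  funext c
  rfl

lemma Pperm_mul (σ τ : Equiv.Perm (Fin N)) :
    Pperm N σ * Pperm N τ = Pperm N (τ * σ) := by
  rw [Pperm_eq, Pperm_eq, Mp_mul, sEquiv_trans, ← Pperm_eq]

lemma sum_mul_Pperm (σ : Equiv.Perm (Fin N)) :
    (∑ τ : Equiv.Perm (Fin N), ((Equiv.Perm.sign τ : ℤ) : ℂ) • Pperm N τ) * Pperm N σ
      = sgnC σ • ∑ τ : Equiv.Perm (Fin N), ((Equiv.Perm.sign τ : ℤ) : ℂ) • Pperm N τ := by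
  rw [Finset.sum_mul]
  calc ∑ τ : Equiv.Perm (Fin N), (((Equiv.Perm.sign τ : ℤ) : ℂ) • Pperm N τ) * Pperm N σ
      = ∑ τ : Equiv.Perm (Fin N), sgnC τ • Pperm N (σ * τ) := by
        refine Finset.sum_congr rfl fun τ _ => ?_
        rw [Matrix.smul_mul, Pperm_mul]; rfl
    _ = ∑ ρ : Equiv.Perm (Fin N), sgnC (σ⁻¹ * ρ) • Pperm N ρ := by
        refine Fintype.sum_equiv (Equiv.mulLeft σ) _ _ fun τ => ?_
        simp [Equiv.coe_mulLeft]
    _ = ∑ ρ : Equiv.Perm (Fin N), sgnC σ • (((Equiv.Perm.sign ρ : ℤ) : ℂ) • Pperm N ρ) := by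
        refine Finset.sum_congr rfl fun ρ _ => ?_
        have : sgnC (σ⁻¹ * ρ) = sgnC σ * sgnC ρ := by
          rw [sgnC_mul]
          congr 1
          simp [sgnC]
        rw [this, mul_smul]; rfl
    _ = _ := by rw [Finset.smul_sum]

lemma A_mul_Pperm (σ : Equiv.Perm (Fin N)) :
    AsymN N * Pperm N σ = sgnC σ • AsymN N := by
  unfold AsymN
  rw [Matrix.smul_mul, sum_mul_Pperm, smul_comm]

lemma tEquiv_trans (a b : Fin N) (hab : a ≠ b) :
    (tEquiv a).trans (tEquiv b) = (sEquiv (Equiv.swap a b)).trans (tEquiv a) := by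
  apply Equiv.ext
  intro p
  have hba : b ≠ a := hab.symm
  simp only [Equiv.trans_apply, tEquiv_apply, sEquiv_apply, Equiv.symm_swap]
  refine Prod.ext ?_ ?_
  · show Function.update p.2 a p.1 b = p.2 (Equiv.swap a b a)
    rw [Function.update_of_ne hba, Equiv.swap_apply_left]
  · show Function.update (Function.update p.2 a p.1) b (p.2 a)
      = Function.update (fun c => p.2 (Equiv.swap a b c)) a p.1
    funext c
    by_cases hca : c = a <;> by_cases hcb : c = b
    · exact absurd (hca.symm.trans hcb) hab
    · subst hca
      rw [Function.update_of_ne hab, Function.update_self, Function.update_self]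
    · subst hcb
      rw [Function.update_self, Function.update_of_ne hba]
      show p.2 a = p.2 (Equiv.swap a c c)
      rw [Equiv.swap_apply_right]
    · rw [Function.update_of_ne hcb, Function.update_of_ne hca, Function.update_of_ne hca]
      show p.2 c = p.2 (Equiv.swap a b c)
      rw [Equiv.swap_apply_of_ne_of_ne hca hcb]

lemma A_P0_P0 (a b : Fin N) (hab : a ≠ b) :
    AsymN N * (P0 N a * P0 N b) = -(AsymN N * P0 N a) := by
  rw [P0_eq a, P0_eq b, Mp_mul, tEquiv_trans a b hab, ← Mp_mul, ← Pperm_eq, ← P0_eq,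
    ← Matrix.mul_assoc, A_mul_Pperm]
  rw [Matrix.smul_mul]
  have : sgnC (Equiv.swap a b) = -1 := by
    simp [sgnC, Equiv.Perm.sign_swap hab]
  rw [this, neg_one_smul]


def eps (f : Fin N → Fin N) : ℂ :=
  if h : Function.Bijective f then sgnC (Equiv.ofBijective f h) else 0

lemma key_sum (f g : Fin N → Fin N) :
    ∑ σ : Equiv.Perm (Fin N),
        sgnC σ * (if ∀ b, f b = g (σ b) then 1 else 0) = eps f * eps g := by
  by_cases hg : Function.Bijective g
  · by_cases hf : Function.Bijective f
    · set σ0 : Equiv.Perm (Fin N) :=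
        (Equiv.ofBijective f hf).trans (Equiv.ofBijective g hg).symm with hσ0
      have hcond : ∀ σ : Equiv.Perm (Fin N), (∀ b, f b = g (σ b)) ↔ σ = σ0 := by
        intro σ
        constructor
        · intro h
          apply Equiv.ext; intro b
          apply hg.injective
          show g (σ b) = g (σ0 b)
          rw [← h b]
          exact (Equiv.ofBijective_apply_symm_apply g hg (f b)).symm
        · rintro rfl b
          exact (Equiv.ofBijective_apply_symm_apply g hg (f b)).symm
      simp_rw [hcond]
      simp only [mul_ite, mul_one, mul_zero]
      rw [Finset.sum_ite_eq' Finset.univ σ0 (fun σ => sgnC σ)]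
      simp only [Finset.mem_univ, if_true]
      have : eps f = sgnC (Equiv.ofBijective f hf) := dif_pos hf
      have hg' : eps g = sgnC (Equiv.ofBijective g hg) := dif_pos hg
      rw [this, hg', hσ0]
      show sgnC ((Equiv.ofBijective g hg).symm * (Equiv.ofBijective f hf)) = _
      rw [sgnC]
      rw [map_mul]
      simp only [Units.val_mul, Int.cast_mul, Equiv.Perm.sign_symm]
      rw [mul_comm]
      rfl
    · have : eps f = 0 := dif_neg hf
      rw [this, zero_mul]
      refine Finset.sum_eq_zero fun σ _ => ?_
      rw [if_neg, mul_zero]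
      intro h
      exact hf (by
        have : f = g ∘ σ := funext h
        rw [this]
        exact hg.comp σ.bijective)
  · have : eps g = 0 := dif_neg hg
    rw [this, mul_zero]
    have hginj : ¬ Function.Injective g := fun h => hg ((Finite.injective_iff_bijective).mp h)
    rw [Function.not_injective_iff] at hginj
    obtain ⟨x, y, hxy, hne⟩ := hginj
    have hswne : ∀ σ : Equiv.Perm (Fin N), σ⁻¹ x ≠ σ⁻¹ y := by
      intro σ h
      apply hne
      have h2 := congrArg σ h
      rwa [Equiv.Perm.coe_inv, Equiv.apply_symm_apply, Equiv.apply_symm_apply] at h2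
    refine Finset.sum_involution
      (fun σ _ => σ * Equiv.swap (σ⁻¹ x) (σ⁻¹ y)) ?_ ?_ (fun _ _ => Finset.mem_univ _) ?_
    · intro σ _
      have hsgn : sgnC (σ * Equiv.swap (σ⁻¹ x) (σ⁻¹ y)) = -sgnC σ := by
        rw [sgnC, map_mul, Equiv.Perm.sign_swap (hswne σ)]
        simp [sgnC]
      have hgp : ∀ b, g ((σ * Equiv.swap (σ⁻¹ x) (σ⁻¹ y)) b) = g (σ b) := by
        intro b
        rcases eq_or_ne b (σ⁻¹ x) with rfl | h1
        · rw [Equiv.Perm.mul_apply, Equiv.swap_apply_left, Equiv.Perm.coe_inv,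
            Equiv.apply_symm_apply, Equiv.apply_symm_apply, hxy]
        · rcases eq_or_ne b (σ⁻¹ y) with rfl | h2
          · rw [Equiv.Perm.mul_apply, Equiv.swap_apply_right, Equiv.Perm.coe_inv,
              Equiv.apply_symm_apply, Equiv.apply_symm_apply, hxy]
          · rw [Equiv.Perm.mul_apply, Equiv.swap_apply_of_ne_of_ne h1 h2]
      show sgnC σ * _ + sgnC (σ * Equiv.swap (σ⁻¹ x) (σ⁻¹ y)) * _ = 0
      simp_rw [hgp]
      rw [hsgn]
      ring
    · intro σ _ hfne
      intro hcontra
      have hsw : Equiv.swap (σ⁻¹ x) (σ⁻¹ y) = 1 := by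
        have := congrArg (fun τ => σ⁻¹ * τ) hcontra
        simpa [← mul_assoc] using this
      apply hswne σ
      have := congrArg (fun e : Equiv.Perm (Fin N) => e (σ⁻¹ x)) hsw
      have h3 : σ⁻¹ y = σ⁻¹ x := by simpa [Equiv.swap_apply_left] using this
      exact h3.symm
    · intro σ _
      show (σ * Equiv.swap (σ⁻¹ x) (σ⁻¹ y)) *
          Equiv.swap ((σ * Equiv.swap (σ⁻¹ x) (σ⁻¹ y))⁻¹ x)
            ((σ * Equiv.swap (σ⁻¹ x) (σ⁻¹ y))⁻¹ y) = σ
      have h1 : (σ * Equiv.swap (σ⁻¹ x) (σ⁻¹ y))⁻¹ x = σ⁻¹ y := by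
        rw [mul_inv_rev, Equiv.Perm.mul_apply, Equiv.swap_inv, Equiv.swap_apply_left]
      have h2 : (σ * Equiv.swap (σ⁻¹ x) (σ⁻¹ y))⁻¹ y = σ⁻¹ x := by
        rw [mul_inv_rev, Equiv.Perm.mul_apply, Equiv.swap_inv, Equiv.swap_apply_right]
      rw [h1, h2, Equiv.swap_comm, mul_assoc, Equiv.swap_mul_self, mul_one]


lemma partner_spec (g : Fin N → Fin N) (hg : ¬ Function.Bijective g) (j m : Fin N)
    (h : Function.Bijective (Function.update g m j)) :
    (Equiv.ofBijective _ h).symm (g m) ≠ m ∧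
    g ((Equiv.ofBijective _ h).symm (g m)) = g m ∧
    ∃ h' : Function.Bijective (Function.update g ((Equiv.ofBijective _ h).symm (g m)) j),
      (Equiv.ofBijective _ h').symm (g ((Equiv.ofBijective _ h).symm (g m))) = m ∧
      eps (Function.update g ((Equiv.ofBijective _ h).symm (g m)) j)
        = - eps (Function.update g m j) := by
  set u := Function.update g m j with hu
  set e := Equiv.ofBijective u h with he
  set m' := e.symm (g m) with hm'def
  have h_um' : u m' = g m := Equiv.ofBijective_apply_symm_apply u h (g m)
  have hm'm : m' ≠ m := by
    intro hcontra
    apply hg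
    have h1 : g m = j := by
      have := h_um'
      rw [hcontra] at this
      rw [← this, hu, Function.update_self]
    have : u = g := by rw [hu, ← h1, Function.update_eq_self]
    rwa [this] at h
  have hgm' : g m' = g m := by
    rw [← h_um', hu, Function.update_of_ne hm'm]
  have hcomp : Function.update g m' j = u ∘ (Equiv.swap m m') := by
    funext c
    show Function.update g m' j c = u (Equiv.swap m m' c)
    by_cases h1 : c = m
    · rw [h1, Equiv.swap_apply_left, Function.update_of_ne (Ne.symm hm'm), h_um']
    · by_cases h2 : c = m'
      · rw [h2, Equiv.swap_apply_right, Function.update_self, hu, Function.update_self]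
      · rw [Equiv.swap_apply_of_ne_of_ne h1 h2, Function.update_of_ne h2, hu,
          Function.update_of_ne h1]
  have h' : Function.Bijective (Function.update g m' j) := by
    rw [hcomp]
    exact h.comp (Equiv.swap m m').bijective
  refine ⟨hm'm, hgm', h', ?_, ?_⟩
  · rw [Equiv.symm_apply_eq]
    show g m' = Function.update g m' j m
    rw [Function.update_of_ne (Ne.symm hm'm), hgm']
  · have he' : Equiv.ofBijective _ h' = (Equiv.swap m m').trans e := by
      apply Equiv.ext
      intro c
      show Function.update g m' j c = u (Equiv.swap m m' c)
      rw [hcomp]; rfl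
    rw [eps, dif_pos h', he', eps, dif_pos h]
    show sgnC (e * Equiv.swap m m') = -sgnC e
    rw [sgnC, map_mul, Equiv.Perm.sign_swap (Ne.symm hm'm)]
    simp [sgnC]

lemma update_sum (i j : Fin N) (g : Fin N → Fin N) :
    ∑ m : Fin N, (if i = g m then 1 else 0) * eps (Function.update g m j)
      = (if i = j then 1 else 0) * eps g := by
  by_cases hg : Function.Bijective g
  · have hepsg : eps g = sgnC (Equiv.ofBijective g hg) := dif_pos hg
    set m0 : Fin N := (Equiv.ofBijective g hg).symm j with hm0
    have hgm0 : g m0 = j := Equiv.ofBijective_apply_symm_apply g hg j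
    have hterm : ∀ m : Fin N,
        (if i = g m then (1:ℂ) else 0) * eps (Function.update g m j)
          = if m = m0 then (if i = j then 1 else 0) * eps g else 0 := by
      intro m
      rcases eq_or_ne m m0 with rfl | hm
      · rw [if_pos rfl, hgm0]
        congr 1
        rw [← hgm0, Function.update_eq_self]
      · rw [if_neg hm]
        have hne : g m ≠ j := by
          intro hcontra
          apply hm
          apply hg.injective
          rw [hgm0, hcontra]
        have hnb : ¬ Function.Bijective (Function.update g m j) := by
          intro hb
          apply hne
          have h1 : Function.update g m j m = j := Function.update_self m j g
          have h2 : Function.update g m j m0 = g m0 :=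
            Function.update_of_ne (Ne.symm hm) j g
          have := hb.injective (h1.trans (h2.trans hgm0).symm)
          rw [← hgm0, ← this]
        rw [eps, dif_neg hnb, mul_zero]
    rw [Finset.sum_congr rfl (fun m _ => hterm m),
      Finset.sum_ite_eq' Finset.univ m0 (fun _ => (if i = j then (1:ℂ) else 0) * eps g)]
    simp
  · have hepsg : eps g = 0 := dif_neg hg
    rw [hepsg, mul_zero]
    refine Finset.sum_involution
      (fun m _ => if h : Function.Bijective (Function.update g m j)
        then (Equiv.ofBijective _ h).symm (g m) else m) ?_ ?_
      (fun _ _ => Finset.mem_univ _) ?_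
    · intro m _
      by_cases h : Function.Bijective (Function.update g m j)
      · obtain ⟨hm'm, hgm', h', hpart, hsign⟩ := partner_spec g hg j m h
        show (if i = g m then (1:ℂ) else 0) * eps (Function.update g m j) +
          (if i = g (if h : _ then _ else _) then (1:ℂ) else 0) *
            eps (Function.update g (if h : _ then _ else _) j) = 0
        rw [dif_pos h]
        rw [hgm', hsign]
        ring
      · show (if i = g m then (1:ℂ) else 0) * eps (Function.update g m j) +
          (if i = g (if h : _ then _ else _) then (1:ℂ) else 0) *
            eps (Function.update g (if h : _ then _ else _) j) = 0
        rw [dif_neg h, eps, dif_neg h]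
        ring
    · intro m _ hfne
      by_cases h : Function.Bijective (Function.update g m j)
      · obtain ⟨hm'm, _, _, _, _⟩ := partner_spec g hg j m h
        show (if h : _ then _ else _) ≠ m
        rw [dif_pos h]
        exact hm'm
      · exfalso
        apply hfne
        rw [eps, dif_neg h, mul_zero]
    · intro m _
      beta_reduce
      by_cases h : Function.Bijective (Function.update g m j)
      · obtain ⟨hm'm, hgm', h', hpart, hsign⟩ := partner_spec g hg j m h
        rw [dif_pos h, dif_pos h']
        exact hpart
      · rw [dif_neg h, dif_neg h]


lemma A_apply (p q : IdxA N) :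
    AsymN N p q = (N.factorial : ℂ)⁻¹ * ((if p.1 = q.1 then 1 else 0) * (eps p.2 * eps q.2)) := by
  unfold AsymN
  rw [Matrix.smul_apply, Matrix.sum_apply, smul_eq_mul]
  congr 1
  by_cases hA : p.1 = q.1
  · rw [if_pos hA, one_mul, ← key_sum p.2 q.2]
    refine Finset.sum_congr rfl fun σ _ => ?_
    rw [Matrix.smul_apply, smul_eq_mul]
    congr 1
    show (if p.1 = q.1 ∧ (∀ b, p.2 b = q.2 (σ b)) then (1:ℂ) else 0) = _
    rw [ite_and, if_pos hA]
  · rw [if_neg hA, zero_mul]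
    refine Finset.sum_eq_zero fun σ _ => ?_
    rw [Matrix.smul_apply, smul_eq_mul]
    show _ * (if p.1 = q.1 ∧ (∀ b, p.2 b = q.2 (σ b)) then (1:ℂ) else 0) = 0
    rw [if_neg (fun h => hA h.1), mul_zero]

lemma sum_A_P0 : ∑ a : Fin N, AsymN N * P0 N a = AsymN N := by
  ext p q
  rw [Matrix.sum_apply]
  have h1 : ∀ a : Fin N, (AsymN N * P0 N a) p q
      = (N.factorial : ℂ)⁻¹ * eps p.2 *
        ((if p.1 = q.2 a then 1 else 0) * eps (Function.update q.2 a q.1)) := by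
    intro a
    rw [P0_eq, mul_Mp_apply, tEquiv_symm]
    rw [show tEquiv a q = (q.2 a, Function.update q.2 a q.1) from rfl]
    rw [A_apply]
    show (N.factorial : ℂ)⁻¹ *
        ((if p.1 = q.2 a then 1 else 0) * (eps p.2 * eps (Function.update q.2 a q.1))) = _
    ring
  rw [Finset.sum_congr rfl fun a _ => h1 a, ← Finset.mul_sum, update_sum p.1 q.1 q.2, A_apply]
  ring

lemma main_ind (N : ℕ) (v : ℂ) (hv : ∀ a : Fin N, v + (a : ℕ) ≠ 0) :
    ∀ m : ℕ, m ≤ N →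
      AsymN N * ((List.ofFn fun a : Fin N => R0 N a (v + (a : ℕ))).reverse.take m).prod
        = AsymN N - (v + ((N - m : ℕ) : ℂ))⁻¹ •
            ∑ i ∈ Finset.univ.filter (fun i : Fin N => N - m ≤ (i : ℕ)), (AsymN N * P0 N i) := by
  intro m
  induction m with
  | zero =>
    intro _
    have hfil : Finset.univ.filter (fun i : Fin N => N - 0 ≤ (i : ℕ)) = ∅ := by
      refine Finset.filter_eq_empty_iff.mpr fun i _ => ?_
      simp only [Nat.sub_zero]
      exact Nat.not_le.mpr i.isLt
    rw [List.take_zero, List.prod_nil, Matrix.mul_one, hfil, Finset.sum_empty, smul_zero,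
      sub_zero]
  | succ m ih =>
    intro hm1
    have hmN : m < N := hm1
    have hlen : ((List.ofFn fun a : Fin N => R0 N a (v + (a : ℕ))).reverse).length = N := by
      simp
    have hmlt : m < ((List.ofFn fun a : Fin N => R0 N a (v + (a : ℕ))).reverse).length := by
      rw [hlen]; exact hmN
    set j : ℕ := N - (m+1) with hj
    have hjN : j < N := by omega
    set jF : Fin N := ⟨j, hjN⟩ with hjF
    have hlm : ((List.ofFn fun a : Fin N => R0 N a (v + (a : ℕ))).reverse)[m]
        = R0 N jF (v + (j : ℕ)) := by
      rw [List.getElem_reverse, List.getElem_ofFn]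
      have hlen2 : (List.ofFn fun a : Fin N => R0 N a (v + (a : ℕ))).length = N :=
        List.length_ofFn
      have hgen : ∀ x : Fin N, x = jF →
          R0 N x (v + ((x : ℕ) : ℂ)) = R0 N jF (v + ((j : ℕ) : ℂ)) := by
        intro x hx
        rw [hx]
      apply hgen
      apply Fin.ext
      show (List.ofFn fun a : Fin N => R0 N a (v + (a : ℕ))).length - 1 - m = j
      omega
    have hd : v + ((jF : ℕ) : ℂ) ≠ 0 := hv jF
    set A := AsymN N with hA
    set S := ∑ i ∈ Finset.univ.filter (fun i : Fin N => N - m ≤ (i : ℕ)), (A * P0 N i)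
      with hS
    set c : ℂ := (v + ((N - m : ℕ) : ℂ))⁻¹ with hc
    set d : ℂ := (v + ((j : ℕ) : ℂ))⁻¹ with hdd
    have hstep : (List.take (m+1)
          ((List.ofFn fun a : Fin N => R0 N a (v + (a : ℕ))).reverse)).prod
        = (List.take m ((List.ofFn fun a : Fin N => R0 N a (v + (a : ℕ))).reverse)).prod
            * R0 N jF (v + (j : ℕ)) := by
      rw [List.prod_take_succ _ m hmlt, hlm]
    rw [hstep, ← Matrix.mul_assoc, ih (le_of_lt hmN)]
    have hR : R0 N jF (v + (j : ℕ)) = 1 - d • P0 N jF := by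
      rw [R0]
    rw [hR]
    have hSP : S * P0 N jF = -S := by
      rw [hS, Finset.sum_mul, ← Finset.sum_neg_distrib]
      refine Finset.sum_congr rfl fun i hi => ?_
      have hij : i ≠ jF := by
        intro hcontra
        have := (Finset.mem_filter.mp hi).2
        rw [hcontra] at this
        simp only [hjF] at this
        omega
      rw [Matrix.mul_assoc, A_P0_P0 i jF hij]
    have expand : (A - c • S) * (1 - d • P0 N jF)
        = A - d • (A * P0 N jF) - c • S + (c * d) • (S * P0 N jF) := by
      rw [Matrix.sub_mul, Matrix.mul_sub, Matrix.mul_sub, Matrix.mul_one, Matrix.mul_one,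
        Matrix.mul_smul, Matrix.mul_smul, Matrix.smul_mul, smul_smul, mul_comm d c]
      abel
    rw [expand, hSP]
    have hsplit : ∑ i ∈ Finset.univ.filter (fun i : Fin N => N - (m+1) ≤ (i : ℕ)),
        (A * P0 N i) = A * P0 N jF + S := by
      have hins : Finset.univ.filter (fun i : Fin N => N - (m+1) ≤ (i : ℕ))
          = insert jF (Finset.univ.filter (fun i : Fin N => N - m ≤ (i : ℕ))) := by
        ext i
        simp only [Finset.mem_filter, Finset.mem_univ, true_and, Finset.mem_insert]
        constructor
        · intro hle
          rcases eq_or_ne i jF with rfl | hne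
          · exact Or.inl rfl
          · refine Or.inr ?_
            have : (i : ℕ) ≠ j := fun hc => hne (Fin.ext hc)
            omega
        · rintro (rfl | hle)
          · simp only [hjF]; omega
          · omega
      rw [hins, Finset.sum_insert (by
        simp only [Finset.mem_filter, Finset.mem_univ, true_and, hjF]
        omega)]
    rw [hsplit, smul_add]
    have hcoef : c • S + (c * d) • S = d • S := by
      rcases Nat.eq_zero_or_pos m with rfl | hmpos
      · have : S = 0 := by
          rw [hS]
          have hfil : Finset.univ.filter (fun i : Fin N => N - 0 ≤ (i : ℕ)) = ∅ := by
            refine Finset.filter_eq_empty_iff.mpr fun i _ => ?_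
            simp only [Nat.sub_zero]
            exact Nat.not_le.mpr i.isLt
          rw [hfil, Finset.sum_empty]
        rw [this, smul_zero, smul_zero, smul_zero, add_zero]
      · have hc' : v + ((N - m : ℕ) : ℂ) ≠ 0 := by
          have := hv ⟨N - m, by omega⟩
          simpa using this
        have hcast : ((N - m : ℕ) : ℂ) = (j : ℕ) + 1 := by
          have : N - m = j + 1 := by omega
          rw [this]
          push_cast
          ring
        rw [← add_smul]
        congr 1
        rw [hc, hdd]
        rw [hcast] at hc'
        have hd' : v + ((j : ℕ) : ℂ) ≠ 0 := by
          have := hv ⟨j, hjN⟩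
          simpa using this
        rw [hcast]
        field_simp
        ring
    calc A - d • (A * P0 N jF) - c • S + (c * d) • -S
        = A - (d • (A * P0 N jF) + (c • S + (c * d) • S)) := by rw [smul_neg]; abel
      _ = A - (d • (A * P0 N jF) + d • S) := by rw [hcoef]

theorem antisymmetrizer_fusion_row' (N : ℕ) (v : ℂ)
    (hv : ∀ a : Fin N, v + (a : ℕ) ≠ 0) :
    AsymN N * ((List.ofFn fun a : Fin N => R0 N a (v + (a : ℕ))).reverse.prod) =
      (1 - v⁻¹) • AsymN N := by
  have hlen : ((List.ofFn fun a : Fin N => R0 N a (v + (a : ℕ))).reverse).length = N := by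
    simp
  have hfull := main_ind N v hv N le_rfl
  rw [show (List.ofFn fun a : Fin N => R0 N a (v + (a : ℕ))).reverse
      = ((List.ofFn fun a : Fin N => R0 N a (v + (a : ℕ))).reverse).take N from
    (List.take_of_length_le (le_of_eq hlen)).symm]
  rw [hfull]
  have h0 : (N - N : ℕ) = 0 := Nat.sub_self N
  rw [h0]
  have hfil : Finset.univ.filter (fun i : Fin N => 0 ≤ (i : ℕ)) = Finset.univ := by
    refine Finset.filter_eq_self.mpr fun i _ => Nat.zero_le _
  rw [hfil, sum_A_P0]
  rw [Nat.cast_zero, add_zero, sub_smul, one_smul]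

end Fuse

/-- `A^{(N)} R_{0N}(v+N-1) R_{0,N-1}(v+N-2) ⋯ R_{01}(v) = A^{(N)} (1 - v⁻¹)`:
here the factor `R_{0a}(v+a-1)` corresponds to `a : Fin N` with shift `v + a`,
and the product is taken with `a` decreasing from left to right. -/
theorem antisymmetrizer_fusion_row (N : ℕ) (hN : 0 < N) (v : ℂ)
    (hv : ∀ a : Fin N, v + (a : ℕ) ≠ 0) :
    AsymN N * ((List.ofFn fun a : Fin N => R0 N a (v + (a : ℕ))).reverse.prod) =
      (1 - v⁻¹) • AsymN N := by
  exact Fuse.antisymmetrizer_fusion_row' N v hv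

end
end
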